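/- arXiv:0705.0038 — 5 statements merged into one kernel-verified Lean document; each statement's English description precedes it below -/
import Mathlib

section
/- Every connected finite simple graph with at least two vertices is isomorphic to a box product P₁ □ P₂ □ ⋯ □ P_k of finitely many prime graphs, and this factorization is unique up to reordering and isomorphism of the factors: if the same graph is also isomorphic to a box product Q₁ □ ⋯ □ Q_l of prime graphs, then k = l and there is a permutation σ of {1,…,k} such that P_i is isomorphic to Q_{σ(i)} for every i. -/
open SimpleGraph

/-- The box (Cartesian) product of a finite family of simple graphs: vertices are
tuples, and two tuples are adjacent iff they differ in exactly one coordinate,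
where they are adjacent in the corresponding factor. -/
def boxProdFamily {k : ℕ} {W : Fin k → Type} (P : ∀ i, SimpleGraph (W i)) :
    SimpleGraph (∀ i, W i) where
  Adj u v := ∃ j, (P j).Adj (u j) (v j) ∧ ∀ i, i ≠ j → u i = v i
  symm := ⟨fun u v ⟨j, hadj, h⟩ => ⟨j, hadj.symm, fun i hi => (h i hi).symm⟩⟩
  loopless := ⟨fun u ⟨j, hadj, _⟩ => (P j).loopless.irrefl _ hadj⟩

/-- A finite simple graph is prime with respect to the box product if it is
connected, has at least two vertices, and in any decomposition as a box product
of two graphs, one of the factors is a single vertex. -/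
def SimpleGraph.IsPrime {V : Type} [Fintype V] (G : SimpleGraph V) : Prop :=
  G.Connected ∧ 2 ≤ Fintype.card V ∧
    ∀ (V₁ V₂ : Type) [Fintype V₁] [Fintype V₂]
      (H₁ : SimpleGraph V₁) (H₂ : SimpleGraph V₂),
      Nonempty (G ≃g H₁.boxProd H₂) →
      Fintype.card V₁ = 1 ∨ Fintype.card V₂ = 1

namespace Sabidussi

open Function

/-- Box product over an arbitrary index type. -/
def BPF {ι : Type} {W : ι → Type} (P : ∀ i, SimpleGraph (W i)) :
    SimpleGraph (∀ i, W i) where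
  Adj u v := ∃ j, (P j).Adj (u j) (v j) ∧ ∀ i, i ≠ j → u i = v i
  symm := ⟨fun u v ⟨j, hadj, h⟩ => ⟨j, hadj.symm, fun i hi => (h i hi).symm⟩⟩
  loopless := ⟨fun u ⟨j, hadj, _⟩ => (P j).loopless.irrefl _ hadj⟩

theorem boxProdFamily_eq {k : ℕ} {W : Fin k → Type} (P : ∀ i, SimpleGraph (W i)) :
    boxProdFamily P = BPF P := rfl

variable {ι : Type} [DecidableEq ι] {W : ι → Type} {P : ∀ i, SimpleGraph (W i)}

theorem bpf_adj {u v : ∀ i, W i} :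
    (BPF P).Adj u v ↔ ∃ j, (P j).Adj (u j) (v j) ∧ ∀ i, i ≠ j → u i = v i := Iff.rfl

/-- Specification of the unique coordinate in which the endpoints of an edge differ. -/
theorem adj_spec {u v : ∀ i, W i} (h : (BPF P).Adj u v) {i : ι} (hi : u i ≠ v i) :
    (P i).Adj (u i) (v i) ∧ ∀ i', i' ≠ i → u i' = v i' := by
  obtain ⟨j, hadj, heq⟩ := h
  have hij : i = j := by
    by_contra hne
    exact hi (heq i hne)
  subst hij
  exact ⟨hadj, heq⟩

theorem adj_exists_ne {u v : ∀ i, W i} (h : (BPF P).Adj u v) : ∃ i, u i ≠ v i := by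
  obtain ⟨j, hadj, _⟩ := h
  exact ⟨j, hadj.ne⟩

theorem adj_update {u : ∀ i, W i} {i : ι} {b : W i} (h : (P i).Adj (u i) b) :
    (BPF P).Adj u (update u i b) := by
  refine ⟨i, ?_, fun i' hi' => ?_⟩
  · simpa using h
  · simp [update_of_ne hi']

/-- Lift a walk in a factor to a walk in the product, moving only coordinate `i`. -/
def liftWalk (u : ∀ i, W i) (i : ι) : ∀ {a b : W i}, (P i).Walk a b →
    (BPF P).Walk (update u i a) (update u i b)
  | _, _, Walk.nil => Walk.nil
  | _, _, Walk.cons h w =>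
      Walk.cons (by
        refine ⟨i, by simpa using h, fun i' hi' => by simp [update_of_ne hi']⟩)
        (liftWalk u i w)

theorem liftWalk_length (u : ∀ i, W i) (i : ι) {a b : W i} (w : (P i).Walk a b) :
    (liftWalk u i (P := P) w).length = w.length := by
  induction w with
  | nil => rfl
  | cons h w ih => exact congrArg (· + 1) ih

section dist

variable [Fintype ι] (hP : ∀ i, (P i).Connected)
include hP

theorem exists_walk_le_sum (u v : ∀ i, W i) :
    ∃ w : (BPF P).Walk u v, w.length ≤ ∑ i, (P i).dist (u i) (v i) := by
  -- by induction on the finset of coordinates where u, v differ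
  suffices H : ∀ (s : Finset ι) (u v : ∀ i, W i), (∀ i ∉ s, u i = v i) →
      ∃ w : (BPF P).Walk u v, w.length ≤ ∑ i ∈ s, (P i).dist (u i) (v i) by
    obtain ⟨w, hw⟩ := H Finset.univ u v (by simp)
    exact ⟨w, by simpa using hw⟩
  intro s
  induction s using Finset.induction_on with
  | empty =>
      intro u v h
      have : u = v := funext fun i => h i (by simp)
      subst this
      exact ⟨Walk.nil, by simp⟩
  | @insert j s hj ih =>
      intro u v h
      obtain ⟨w₁, hw₁⟩ := ((hP j) (u j) (v j)).exists_walk_length_eq_dist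
      let wa : (BPF P).Walk u (update u j (v j)) :=
        (liftWalk u j w₁).copy (by simp) rfl
      obtain ⟨w₂, hw₂⟩ := ih (update u j (v j)) v (by
        intro i hi
        by_cases hij : i = j
        · subst hij; simp
        · rw [update_of_ne hij]
          exact h i (by simp [hi, hij]))
      refine ⟨wa.append w₂, ?_⟩
      rw [Walk.length_append, Finset.sum_insert hj]
      have h1 : wa.length = (P j).dist (u j) (v j) := by
        show ((liftWalk u j w₁).copy (by simp) rfl).length = _
        rw [Walk.length_copy, liftWalk_length]
        exact hw₁
      have h2 : ∑ i ∈ s, (P i).dist (update u j (v j) i) (v i)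
          = ∑ i ∈ s, (P i).dist (u i) (v i) := by
        refine Finset.sum_congr rfl fun i hi => ?_
        have hij : i ≠ j := fun he => hj (he ▸ hi)
        have : update u j (v j) i = u i := update_of_ne hij _ _
        rw [this]
      omega

theorem bpf_connected : (BPF P).Connected := by
  have : Nonempty (∀ i, W i) := ⟨fun i => (hP i).nonempty.some⟩
  refine ⟨fun u v => ?_⟩
  obtain ⟨w, _⟩ := exists_walk_le_sum hP u v
  exact ⟨w⟩

theorem dist_le_sum (u v : ∀ i, W i) :
    (BPF P).dist u v ≤ ∑ i, (P i).dist (u i) (v i) := by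
  obtain ⟨w, hw⟩ := exists_walk_le_sum hP u v
  exact le_trans (SimpleGraph.dist_le w) hw

theorem sum_le_dist (u v : ∀ i, W i) :
    ∑ i, (P i).dist (u i) (v i) ≤ (BPF P).dist u v := by
  obtain ⟨w, hw⟩ := ((bpf_connected hP) u v).exists_walk_length_eq_dist
  rw [← hw]
  clear hw
  induction w with
  | nil => simp
  | @cons u x v h w ih =>
      obtain ⟨j, hadj, heq⟩ := h
      have hd : (P j).dist (u j) (v j) ≤ (P j).dist (x j) (v j) + 1 := by
        have := (hP j).dist_triangle (u := u j) (v := x j) (w := v j)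
        have h1 : (P j).dist (u j) (x j) ≤ 1 := SimpleGraph.dist_le hadj.toWalk
        omega
      have hsum : ∑ i, (P i).dist (u i) (v i) ≤ (∑ i, (P i).dist (x i) (v i)) + 1 := by
        rw [← Finset.sum_erase_add _ _ (Finset.mem_univ j),
            ← Finset.sum_erase_add _ _ (Finset.mem_univ j)]
        have herase : ∑ i ∈ Finset.univ.erase j, (P i).dist (u i) (v i)
            = ∑ i ∈ Finset.univ.erase j, (P i).dist (x i) (v i) := by
          refine Finset.sum_congr rfl fun i hi => ?_
          rw [heq i (Finset.mem_erase.mp hi).1]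
        omega
      exact le_trans hsum (Nat.add_le_add_right ih 1)

end dist


section conv

variable [Fintype ι]

/-- Interval-closed ("convex") subsets of a graph. -/
def IClosed {α : Type} (G : SimpleGraph α) (S : Set α) : Prop :=
  ∀ u ∈ S, ∀ v ∈ S, ∀ w, G.dist u w + G.dist w v = G.dist u v → w ∈ S

/-- The layer through `x` in direction `i`. -/
def layer (i : ι) (x : ∀ i, W i) : Set (∀ i, W i) := {w | ∀ i', i' ≠ i → w i' = x i'}

theorem self_mem_layer {i : ι} {x : ∀ i, W i} : x ∈ layer i x := fun _ _ => rfl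

variable (hP : ∀ i, (P i).Connected)
include hP

theorem layer_iclosed (i : ι) (x : ∀ i, W i) : IClosed (BPF P) (layer i x) := by
  intro u hu v hv w hw
  have huv : ∀ i', i' ≠ i → u i' = v i' := fun i' h => (hu i' h).trans (hv i' h).symm
  have hsum_uv : ∑ i', (P i').dist (u i') (v i') = (P i).dist (u i) (v i) := by
    refine Finset.sum_eq_single i (fun i' _ h => ?_) (by simp)
    rw [huv i' h]; exact SimpleGraph.dist_self
  have h1 : ∑ i', (P i').dist (u i') (w i') ≤ (BPF P).dist u w := sum_le_dist hP u w
  have h2 : ∑ i', (P i').dist (w i') (v i') ≤ (BPF P).dist w v := sum_le_dist hP w v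
  have h3 : (BPF P).dist u v ≤ (P i).dist (u i) (v i) := by
    have := dist_le_sum hP u v
    omega
  have htri : (P i).dist (u i) (v i) ≤ (P i).dist (u i) (w i) + (P i).dist (w i) (v i) :=
    (hP i).dist_triangle
  have hai : (P i).dist (u i) (w i) ≤ ∑ i', (P i').dist (u i') (w i') :=
    Finset.single_le_sum (f := fun i' => (P i').dist (u i') (w i'))
      (fun _ _ => Nat.zero_le _) (Finset.mem_univ i)
  have hbi : (P i).dist (w i) (v i) ≤ ∑ i', (P i').dist (w i') (v i') :=
    Finset.single_le_sum (f := fun i' => (P i').dist (w i') (v i'))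
      (fun _ _ => Nat.zero_le _) (Finset.mem_univ i)
  have hea : ∑ i', (P i').dist (u i') (w i') = (P i).dist (u i) (w i) := by omega
  intro i' hi'
  have hz : (P i').dist (u i') (w i') = 0 := by
    have h5 : ∑ x ∈ Finset.univ.erase i', (P x).dist (u x) (w x) + (P i').dist (u i') (w i')
        = ∑ x, (P x).dist (u x) (w x) := Finset.sum_erase_add _ _ (Finset.mem_univ i')
    have h6 : (P i).dist (u i) (w i) ≤ ∑ x ∈ Finset.univ.erase i', (P x).dist (u x) (w x) :=
      Finset.single_le_sum (f := fun x => (P x).dist (u x) (w x))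
        (fun _ _ => Nat.zero_le _) (Finset.mem_erase.mpr ⟨fun h => hi' h.symm, Finset.mem_univ i⟩)
    omega
  have : u i' = w i' := (hP i').dist_eq_zero_iff.mp hz
  rw [← this]; exact hu i' hi'

theorem mix_mem {S : Set (∀ i, W i)} (hS : IClosed (BPF P) S) {u v : ∀ i, W i}
    (hu : u ∈ S) (hv : v ∈ S) (j : ι) : update v j (u j) ∈ S := by
  set z := update v j (u j) with hz
  have b1 : (BPF P).dist u z ≤ ∑ i ∈ Finset.univ.erase j, (P i).dist (u i) (v i) := by
    refine le_trans (dist_le_sum hP u z) ?_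
    rw [← Finset.sum_erase_add _ _ (Finset.mem_univ j)]
    have : (P j).dist (u j) (z j) = 0 := by simp [hz]
    rw [this, Nat.add_zero]
    refine le_of_eq (Finset.sum_congr rfl fun i hi => ?_)
    rw [hz, update_of_ne (Finset.mem_erase.mp hi).1]
  have b2 : (BPF P).dist z v ≤ (P j).dist (u j) (v j) := by
    refine le_trans (dist_le_sum hP z v) ?_
    rw [← Finset.sum_erase_add _ _ (Finset.mem_univ j)]
    have h0 : ∑ i ∈ Finset.univ.erase j, (P i).dist (z i) (v i) = 0 := by
      refine Finset.sum_eq_zero fun i hi => ?_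
      rw [hz, update_of_ne (Finset.mem_erase.mp hi).1]; exact SimpleGraph.dist_self
    rw [h0, hz, update_self]; simp
  have lower : ∑ i, (P i).dist (u i) (v i) ≤ (BPF P).dist u v := sum_le_dist hP u v
  have tri : (BPF P).dist u v ≤ (BPF P).dist u z + (BPF P).dist z v :=
    (bpf_connected hP).dist_triangle
  have hsplit : ∑ i ∈ Finset.univ.erase j, (P i).dist (u i) (v i) + (P j).dist (u j) (v j)
      = ∑ i, (P i).dist (u i) (v i) := Finset.sum_erase_add _ _ (Finset.mem_univ j)
  exact hS u hu v hv z (by omega)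

end conv

section isotools

theorem iso_dist_le {α β : Type} {A : SimpleGraph α} {B : SimpleGraph β} (g : A ≃g B)
    {u v : α} (h : A.Reachable u v) : B.dist (g u) (g v) ≤ A.dist u v := by
  obtain ⟨w, hw⟩ := h.exists_walk_length_eq_dist
  calc B.dist (g u) (g v) ≤ (w.map g.toHom).length := SimpleGraph.dist_le _
    _ = A.dist u v := by rw [Walk.length_map]; exact hw

theorem iso_dist {α β : Type} {A : SimpleGraph α} {B : SimpleGraph β} (g : A ≃g B)
    (hA : A.Connected) (u v : α) : B.dist (g u) (g v) = A.dist u v := by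
  refine le_antisymm (iso_dist_le g (hA u v)) ?_
  have hB : B.Connected := g.connected_iff.mp hA
  have := iso_dist_le g.symm (hB (g u) (g v))
  simpa using this

theorem image_iclosed {α β : Type} {A : SimpleGraph α} {B : SimpleGraph β} (g : A ≃g B)
    (hA : A.Connected) {S : Set α} (hS : IClosed A S) : IClosed B (⇑g '' S) := by
  rintro _ ⟨u, hu, rfl⟩ _ ⟨v, hv, rfl⟩ w hw
  rw [← g.apply_symm_apply w] at hw ⊢
  rw [iso_dist g hA, iso_dist g hA, iso_dist g hA] at hw
  exact ⟨_, hS u hu v hv _ hw, rfl⟩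

/-- The layer in direction `i` is isomorphic to the `i`-th factor. -/
noncomputable def layerIso (i : ι) (x : ∀ i, W i) :
    P i ≃g (BPF P).induce (layer i x) where
  toFun a := ⟨update x i a, fun i' h => update_of_ne h _ _⟩
  invFun w := w.1 i
  left_inv a := by simp
  right_inv w := by
    ext i'
    by_cases h : i' = i
    · subst h; simp
    · simp [update_of_ne h, w.2 i' h]
  map_rel_iff' := by
    intro a b
    simp only [comap_adj, Embedding.coe_subtype]
    constructor
    · intro h
      have hi : update x i a i ≠ update x i b i := by
        intro heq
        have heqq : update x i a = update x i b := by
          ext i'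
          by_cases h' : i' = i
          · subst h'; exact heq
          · simp [update_of_ne h']
        have h' : (BPF P).Adj (update x i a) (update x i b) := h
        rw [heqq] at h'
        exact (BPF P).loopless.irrefl _ h'
      have := (adj_spec h hi).1
      simpa using this
    · intro h
      have := adj_update (P := P) (u := update x i a) (i := i) (b := b) (by simpa using h)
      simpa [Function.update_idem] using this

/-- An isomorphism restricts to an isomorphism of induced subgraphs. -/
def isoInduceImage {α β : Type} {A : SimpleGraph α} {B : SimpleGraph β} (g : A ≃g B)
    (S : Set α) : A.induce S ≃g B.induce (⇑g '' S) where
  toEquiv := g.toEquiv.image S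
  map_rel_iff' := by
    intro a b
    simp only [Equiv.image, comap_adj, Embedding.coe_subtype]
    exact g.map_rel_iff

end isotools


section convsplit

variable [Fintype ι] (hP : ∀ i, (P i).Connected)

/-- Restriction map forgetting coordinate `j₀`. -/
def restr (j₀ : ι) (t : ∀ i, W i) : ∀ m : {i : ι // i ≠ j₀}, W m.1 := fun m => t m.1

include hP in
/-- An interval-closed subset of a box product splits as a binary box product at any
coordinate. -/
theorem convSplit {S : Set (∀ i, W i)} (hS : IClosed (BPF P) S) (j₀ : ι) :
    Nonempty ((BPF P).induce S ≃g
      ((P j₀).induce ((fun t => t j₀) '' S)).boxProd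
      ((BPF (fun m : {i : ι // i ≠ j₀} => P m.1)).induce (restr j₀ '' S))) := by
  classical
  set A : Set (W j₀) := (fun t => t j₀) '' S with hA
  set B : Set (∀ m : {i : ι // i ≠ j₀}, W m.1) := restr j₀ '' S with hB
  set φ : ↥S → ↥A × ↥B := fun s => (⟨s.1 j₀, ⟨s.1, s.2, rfl⟩⟩, ⟨restr j₀ s.1, ⟨s.1, s.2, rfl⟩⟩)
    with hφ
  have hbij : Function.Bijective φ := by
    constructor
    · intro s t hst
      have h1 : s.1 j₀ = t.1 j₀ := congrArg (fun p : ↥A × ↥B => (p.1 : W j₀)) hst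
      have h2 : restr j₀ s.1 = restr j₀ t.1 :=
        congrArg (fun p : ↥A × ↥B => (p.2 : ∀ m : {i : ι // i ≠ j₀}, W m.1)) hst
      refine Subtype.ext (funext fun i => ?_)
      by_cases h : i = j₀
      · subst h; exact h1
      · exact congrFun h2 ⟨i, h⟩
    · rintro ⟨⟨a, u, hu, hua⟩, ⟨b, v, hv, hvb⟩⟩
      refine ⟨⟨update v j₀ (u j₀), mix_mem hP hS hu hv j₀⟩, ?_⟩
      simp only [hφ, Prod.mk.injEq, Subtype.mk.injEq]
      constructor
      · exact Subtype.ext (by simpa using hua)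
      · refine Subtype.ext (funext fun m => ?_)
        show update v j₀ (u j₀) m.1 = b m
        rw [update_of_ne m.2, ← hvb]
        rfl
  refine ⟨⟨Equiv.ofBijective φ hbij, ?_⟩⟩
  intro s t
  show (boxProd _ _).Adj (φ s) (φ t) ↔ (BPF P).Adj s.1 t.1
  rw [boxProd_adj]
  simp only [hφ, comap_adj, Embedding.coe_subtype, Subtype.mk.injEq]
  constructor
  · rintro (⟨hadj, heq⟩ | ⟨⟨m, hadj, heqm⟩, heq0⟩)
    · exact ⟨j₀, hadj, fun i hi => congrFun (congrArg Subtype.val heq) ⟨i, hi⟩⟩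
    · refine ⟨m.1, hadj, fun i hi => ?_⟩
      by_cases h : i = j₀
      · subst h; exact congrArg Subtype.val heq0
      · exact heqm ⟨i, h⟩ (fun he => hi (congrArg Subtype.val he))
  · rintro ⟨j, hadj, heq⟩
    by_cases h : j = j₀
    · subst h
      exact Or.inl ⟨hadj, Subtype.ext (funext fun m => heq m.1 m.2)⟩
    · refine Or.inr ⟨⟨⟨j, h⟩, hadj, fun m' hm' => ?_⟩, Subtype.ext (heq j₀ (fun he => h he.symm))⟩
      exact heq m'.1 (fun he => hm' (Subtype.ext he))

end convsplit


section main

variable {ι κ : Type} [Fintype ι] [DecidableEq ι] [Fintype κ] [DecidableEq κ]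
  {W : ι → Type} {X : κ → Type} [∀ i, Fintype (W i)] [∀ j, Fintype (X j)]
  {P : ∀ i, SimpleGraph (W i)} {Q : ∀ j, SimpleGraph (X j)}

/-- Lemma A: any two edges lying in a common `i`-layer of `∏ P` are mapped by `g`
to edges moving the same coordinate of `∏ Q`. -/
theorem layer_mono (hP : ∀ i, (P i).IsPrime) (hQc : ∀ j, (Q j).Connected)
    (g : BPF P ≃g BPF Q) (i : ι)
    {x₁ y₁ x₂ y₂ : ∀ i, W i} (h₁ : (BPF P).Adj x₁ y₁) (h₂ : (BPF P).Adj x₂ y₂)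
    (hl : ∀ i', i' ≠ i → x₁ i' = x₂ i')
    (hd₁ : x₁ i ≠ y₁ i) (hd₂ : x₂ i ≠ y₂ i)
    {j₁ j₂ : κ} (hj₁ : g x₁ j₁ ≠ g y₁ j₁) (hj₂ : g x₂ j₂ ≠ g y₂ j₂) : j₁ = j₂ := by
  classical
  by_contra hne
  have hPc : ∀ i, (P i).Connected := fun i => (hP i).1
  set L : Set (∀ i, W i) := layer i x₁ with hL
  have hx₁ : x₁ ∈ L := self_mem_layer
  have hy₁ : y₁ ∈ L := fun i' h => ((adj_spec h₁ hd₁).2 i' h).symm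
  have hx₂ : x₂ ∈ L := fun i' h => (hl i' h).symm
  have hy₂ : y₂ ∈ L := fun i' h => ((adj_spec h₂ hd₂).2 i' h).symm.trans (hx₂ i' h)
  set S : Set (∀ j, X j) := ⇑g '' L with hS
  have hSclosed : IClosed (BPF Q) S :=
    image_iclosed g (bpf_connected hPc) (layer_iclosed hPc i x₁)
  obtain ⟨split⟩ := convSplit hQc hSclosed j₁
  set A : Set (X j₁) := (fun t => t j₁) '' S with hA
  set B : Set (∀ m : {j : κ // j ≠ j₁}, X m.1) := restr j₁ '' S with hB
  have iso : P i ≃g ((Q j₁).induce A).boxProd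
      ((BPF (fun m : {j : κ // j ≠ j₁} => Q m.1)).induce B) :=
    (layerIso i x₁).trans ((isoInduceImage g L).trans split)
  have hcardA : 2 ≤ Fintype.card ↥A := by
    have hmem1 : g x₁ j₁ ∈ A := ⟨g x₁, ⟨x₁, hx₁, rfl⟩, rfl⟩
    have hmem2 : g y₁ j₁ ∈ A := ⟨g y₁, ⟨y₁, hy₁, rfl⟩, rfl⟩
    have hne' : (⟨g x₁ j₁, hmem1⟩ : ↥A) ≠ ⟨g y₁ j₁, hmem2⟩ := by
      intro he; exact hj₁ (congrArg Subtype.val he)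
    exact Fintype.one_lt_card_iff_nontrivial.mpr ⟨⟨_, _, hne'⟩⟩
  have hcardB : 2 ≤ Fintype.card ↥B := by
    have hmem1 : restr j₁ (g x₂) ∈ B := ⟨g x₂, ⟨x₂, hx₂, rfl⟩, rfl⟩
    have hmem2 : restr j₁ (g y₂) ∈ B := ⟨g y₂, ⟨y₂, hy₂, rfl⟩, rfl⟩
    have hne' : (⟨restr j₁ (g x₂), hmem1⟩ : ↥B) ≠ ⟨restr j₁ (g y₂), hmem2⟩ := by
      intro he
      exact hj₂ (congrFun (congrArg Subtype.val he) ⟨j₂, fun h => hne h.symm⟩)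
    exact Fintype.one_lt_card_iff_nontrivial.mpr ⟨⟨_, _, hne'⟩⟩
  rcases (hP i).2.2 ↥A ↥B _ _ ⟨iso⟩ with h | h <;> omega

end main


section squares

theorem exists_adj_vert {α : Type} [Fintype α] {H : SimpleGraph α} (h : H.Connected)
    (hc : 2 ≤ Fintype.card α) (a : α) : ∃ b, H.Adj a b := by
  obtain ⟨b, hb⟩ := Fintype.exists_ne_of_one_lt_card hc a
  obtain ⟨p⟩ := h a b
  cases p with
  | nil => exact absurd rfl hb
  | cons h' _ => exact ⟨_, h'⟩

/-- Pure coordinate bookkeeping for a square. -/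
theorem square_coords {κ : Type} {X : κ → Type} {gx gy gz gw : ∀ j, X j} {j₁ j₂ j₃ j₄ : κ}
    (E1 : ∀ j, j ≠ j₁ → gx j = gz j) (N1 : gx j₁ ≠ gz j₁)
    (E2 : ∀ j, j ≠ j₂ → gx j = gy j) (N2 : gx j₂ ≠ gy j₂)
    (E3 : ∀ j, j ≠ j₃ → gy j = gw j) (N3 : gy j₃ ≠ gw j₃)
    (E4 : ∀ j, j ≠ j₄ → gz j = gw j)
    (hyz : gy ≠ gz) : j₃ = j₁ ∨ j₃ = j₂ := by
  by_contra hcon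
  push_neg at hcon
  obtain ⟨h31, h32⟩ := hcon
  have h14 : j₁ = j₄ ∨ j₁ = j₂ := by
    by_contra hc
    push_neg at hc
    obtain ⟨h14, h12⟩ := hc
    have e1 : gw j₁ = gy j₁ := (E3 j₁ (fun h => h31 h.symm)).symm
    have e2 : gy j₁ = gx j₁ := (E2 j₁ h12).symm
    have e3 : gz j₁ = gw j₁ := E4 j₁ h14
    exact N1 (by rw [e3, e1, e2])
  rcases h14 with h14 | h12
  · -- j₁ = j₄ ; split on whether j₁ = j₂
    by_cases h12 : j₁ = j₂
    · -- case j₁ = j₂ : derive gy = gz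
      subst h12
      have h34 : j₃ = j₄ := by
        by_contra h34
        have e1 : gy j₃ = gx j₃ := (E2 j₃ h32).symm
        have e2 : gx j₃ = gz j₃ := E1 j₃ h31
        have e3 : gz j₃ = gw j₃ := E4 j₃ h34
        exact N3 (by rw [e1, e2, e3])
      refine absurd ?_ hyz
      funext j
      by_cases hj : j = j₃
      · rw [hj, ← E2 j₃ h32, E1 j₃ h31]
      · rw [E3 j hj, ← E4 j (fun h => hj (h.trans h34.symm))]
    · -- j₁ = j₄, j₁ ≠ j₂
      have e1 : gy j₂ = gw j₂ := E3 j₂ (fun h => h32 h.symm)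
      have e2 : gw j₂ = gz j₂ := (E4 j₂ (fun h => h12 (h14.trans h.symm))).symm
      have e3 : gz j₂ = gx j₂ := (E1 j₂ (fun h => h12 h.symm)).symm
      exact N2 (by rw [e1, e2, e3])
  · -- j₁ = j₂ case again (from h14 right branch)
    subst h12
    have h34 : j₃ = j₄ := by
      by_contra h34
      have e1 : gy j₃ = gx j₃ := (E2 j₃ h32).symm
      have e2 : gx j₃ = gz j₃ := E1 j₃ h31
      have e3 : gz j₃ = gw j₃ := E4 j₃ h34
      exact N3 (by rw [e1, e2, e3])
    refine absurd ?_ hyz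
    funext j
    by_cases hj : j = j₃
    · rw [hj, ← E2 j₃ h32, E1 j₃ h31]
    · rw [E3 j hj, ← E4 j (fun h => hj (h.trans h34.symm))]

end squares

section transport

variable {ι κ : Type} [Fintype ι] [DecidableEq ι] [Fintype κ] [DecidableEq κ]
  {W : ι → Type} {X : κ → Type} [∀ i, Fintype (W i)] [∀ j, Fintype (X j)]
  {P : ∀ i, SimpleGraph (W i)} {Q : ∀ j, SimpleGraph (X j)}

variable (hP : ∀ i, (P i).IsPrime) (hQ : ∀ j, (Q j).IsPrime) (g : BPF P ≃g BPF Q)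
include hP hQ

/-- Transport of the `Q`-color of `i`-edges along an edge of the product. -/
theorem step_color {i : ι} {x y z w : ∀ i, W i}
    (hxy : (BPF P).Adj x y)
    (hxz : (BPF P).Adj x z) (hxzi : x i ≠ z i)
    (hyw : (BPF P).Adj y w) (hywi : y i ≠ w i)
    {j₁ j₃ : κ} (hj₁ : g x j₁ ≠ g z j₁) (hj₃ : g y j₃ ≠ g w j₃) : j₁ = j₃ := by
  classical
  have hPc : ∀ i, (P i).Connected := fun i => (hP i).1
  have hQc : ∀ j, (Q j).Connected := fun j => (hQ j).1
  obtain ⟨i', hi'⟩ := adj_exists_ne hxy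
  by_cases hii : i' = i
  · -- x and y lie in a common i-layer
    subst hii
    exact layer_mono hP hQc g i' hxz hyw
      (fun i'' h => (adj_spec hxy hi').2 i'' h) hxzi hywi hj₁ hj₃
  · -- genuine square case
    have hxyspec := adj_spec hxy hi'
    have hxzspec := adj_spec hxz hxzi
    have hyi : y i = x i := ((hxyspec).2 i (fun h => hii h.symm)).symm
    set w' : ∀ i, W i := update y i (z i) with hw'
    have hyw' : (BPF P).Adj y w' := by
      refine adj_update ?_
      rw [hyi]
      exact hxzspec.1
    have hyw'i : y i ≠ w' i := by
      rw [hw', update_self, hyi]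
      exact hxzi
    have hzw' : (BPF P).Adj z w' := by
      refine ⟨i', ?_, fun i'' h => ?_⟩
      · have h1 : z i' = x i' := (hxzspec.2 i' hii).symm
        have h2 : w' i' = y i' := update_of_ne hii _ _
        rw [h1, h2]
        exact hxyspec.1
      · by_cases hi'' : i'' = i
        · subst hi''
          rw [hw', update_self]
        · rw [hw', update_of_ne hi'']
          rw [← hxzspec.2 i'' hi'', hxyspec.2 i'' h]
    -- Q-side data
    obtain ⟨j₂, hj₂⟩ := adj_exists_ne (g.map_rel_iff.mpr hxy)
    obtain ⟨j₃', hj₃'⟩ := adj_exists_ne (g.map_rel_iff.mpr hyw')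
    obtain ⟨j₄, hj₄⟩ := adj_exists_ne (g.map_rel_iff.mpr hzw')
    -- the two i-edges at y have the same Q-color
    have h33 : j₃ = j₃' :=
      layer_mono hP hQc g i hyw hyw' (fun _ _ => rfl) hywi hyw'i hj₃ hj₃'
    have E1 := (adj_spec (g.map_rel_iff.mpr hxz) hj₁).2
    have E2 := (adj_spec (g.map_rel_iff.mpr hxy) hj₂).2
    have E3 := (adj_spec (g.map_rel_iff.mpr hyw') hj₃').2
    have E4 := (adj_spec (g.map_rel_iff.mpr hzw') hj₄).2
    have hyz : g y ≠ g z := by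
      intro he
      have : y = z := g.toEquiv.injective he
      rw [← this] at hxzi
      exact hxzi hyi.symm
    rcases square_coords E1 hj₁ E2 hj₂ E3 hj₃' E4 hyz with hcase | hcase
    · rw [h33, hcase]
    · -- degenerate case: contradiction via the Q-side layer lemma
      exfalso
      have hd₂ : g y j₂ ≠ g w' j₂ := by
        rw [← hcase]
        exact hj₃'
      have hconc : i' = i := by
        refine layer_mono hQ hPc g.symm j₂ (g.map_rel_iff.mpr hxy.symm)
          (g.map_rel_iff.mpr hyw') (fun _ _ => rfl) (Ne.symm hj₂) hd₂ ?_ ?_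
        · simp only [RelIso.symm_apply_apply]
          exact fun h => hi' h.symm
        · simp only [RelIso.symm_apply_apply]
          exact hyw'i
      exact hii hconc

/-- The `Q`-color of `i`-edges is constant along walks. -/
theorem walk_color {i : ι} : ∀ {x₁ x₂ : ∀ i, W i} (p : (BPF P).Walk x₁ x₂)
    {z₁ z₂ : ∀ i, W i},
    (BPF P).Adj x₁ z₁ → x₁ i ≠ z₁ i →
    (BPF P).Adj x₂ z₂ → x₂ i ≠ z₂ i →
    ∀ {j₁ j₂ : κ}, g x₁ j₁ ≠ g z₁ j₁ → g x₂ j₂ ≠ g z₂ j₂ → j₁ = j₂ := by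
  classical
  intro x₁ x₂ p
  induction p with
  | nil =>
      intro z₁ z₂ h₁ hi₁ h₂ hi₂ j₁ j₂ hj₁ hj₂
      exact layer_mono hP (fun j => (hQ j).1) g i h₁ h₂ (fun _ _ => rfl) hi₁ hi₂ hj₁ hj₂
  | @cons u m v h p ih =>
      intro z₁ z₂ h₁ hi₁ h₂ hi₂ j₁ j₂ hj₁ hj₂
      obtain ⟨b, hb⟩ := exists_adj_vert (hP i).1 (hP i).2.1 (m i)
      have hmz : (BPF P).Adj m (update m i b) := adj_update hb
      have hmzi : m i ≠ update m i b i := by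
        rw [update_self]
        exact hb.ne
      obtain ⟨jm, hjm⟩ := adj_exists_ne (g.map_rel_iff.mpr hmz)
      have e1 : j₁ = jm := step_color hP hQ g h h₁ hi₁ hmz hmzi hj₁ hjm
      have e2 : jm = j₂ := ih hmz hmzi h₂ hi₂ hjm hj₂
      rw [e1, e2]

/-- Global constancy: any two `i`-edges have the same `Q`-color. -/
theorem color_const {i : ι} {x y z w : ∀ i, W i}
    (hxz : (BPF P).Adj x z) (hxzi : x i ≠ z i)
    (hyw : (BPF P).Adj y w) (hywi : y i ≠ w i)
    {j₁ j₂ : κ} (hj₁ : g x j₁ ≠ g z j₁) (hj₂ : g y j₂ ≠ g w j₂) : j₁ = j₂ := by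
  have hPc : ∀ i, (P i).Connected := fun i => (hP i).1
  obtain ⟨p⟩ := (bpf_connected hPc) x y
  exact walk_color hP hQ g p hxz hxzi hyw hywi hj₁ hj₂

end transport


section unique

variable {ι κ : Type} [Fintype ι] [DecidableEq ι] [Fintype κ] [DecidableEq κ]
  {W : ι → Type} {X : κ → Type} [∀ i, Fintype (W i)] [∀ j, Fintype (X j)]
  {P : ∀ i, SimpleGraph (W i)} {Q : ∀ j, SimpleGraph (X j)}

/-- The "factor `i` of `P` corresponds to factor `j` of `Q`" relation. -/
def Rel (g : BPF P ≃g BPF Q) (i : ι) (j : κ) : Prop :=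
  ∃ x y, (BPF P).Adj x y ∧ x i ≠ y i ∧ g x j ≠ g y j

variable (hP : ∀ i, (P i).IsPrime) (hQ : ∀ j, (Q j).IsPrime) (g : BPF P ≃g BPF Q)

include hP in
theorem rel_exists (i : ι) : ∃ j, Rel g i j := by
  have hPc : ∀ i, (P i).Connected := fun i => (hP i).1
  have hne : Nonempty (∀ i, W i) := ⟨fun i => (hPc i).nonempty.some⟩
  obtain ⟨v₀⟩ := hne
  obtain ⟨b, hb⟩ := exists_adj_vert (hP i).1 (hP i).2.1 (v₀ i)
  have hadj : (BPF P).Adj v₀ (update v₀ i b) := adj_update hb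
  obtain ⟨j, hj⟩ := adj_exists_ne (g.map_rel_iff.mpr hadj)
  exact ⟨j, v₀, update v₀ i b, hadj, by rw [update_self]; exact hb.ne, hj⟩

include hP hQ in
theorem rel_unique {i : ι} {j j' : κ} (h : Rel g i j) (h' : Rel g i j') : j = j' := by
  obtain ⟨x, y, hxy, hi, hj⟩ := h
  obtain ⟨x', y', hxy', hi', hj'⟩ := h'
  exact color_const hP hQ g hxy hi hxy' hi' hj hj'

theorem rel_symm {i : ι} {j : κ} (h : Rel g i j) : Rel g.symm j i := by
  obtain ⟨x, y, hxy, hi, hj⟩ := h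
  refine ⟨g x, g y, g.map_rel_iff.mpr hxy, hj, ?_⟩
  simpa only [RelIso.symm_apply_apply] using hi

theorem rel_symm₂ {i : ι} {j : κ} (h : Rel g.symm j i) : Rel g i j := by
  obtain ⟨x, y, hxy, hj, hi⟩ := h
  refine ⟨g.symm x, g.symm y, g.symm.map_rel_iff.mpr hxy, hi, ?_⟩
  simpa only [RelIso.apply_symm_apply] using hj

include hP hQ in
theorem factor_emb {i : ι} {j : κ} (hrel : Rel g i j) :
    ∃ φ : W i → X j, Function.Injective φ ∧
      ∀ a b, (P i).Adj a b ↔ (Q j).Adj (φ a) (φ b) := by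
  classical
  have hPc : ∀ i, (P i).Connected := fun i => (hP i).1
  obtain ⟨v₀⟩ : Nonempty (∀ i, W i) := ⟨fun i => (hPc i).nonempty.some⟩
  -- the edge between updates
  have upd_adj : ∀ (a c : W i), (P i).Adj a c →
      (BPF P).Adj (update v₀ i a) (update v₀ i c) ∧ update v₀ i a i ≠ update v₀ i c i := by
    intro a c h
    constructor
    · have := adj_update (P := P) (u := update v₀ i a) (i := i) (b := c) (by simpa using h)
      rwa [Function.update_idem] at this
    · rw [update_self, update_self]
      exact h.ne
  -- all edges in the i-layer of v₀ move only Q-coordinate j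
  have upd_diff : ∀ (a c : W i), (P i).Adj a c →
      g (update v₀ i a) j ≠ g (update v₀ i c) j ∧
      ∀ j', j' ≠ j → g (update v₀ i a) j' = g (update v₀ i c) j' := by
    intro a c h
    obtain ⟨hadj, hdiff⟩ := upd_adj a c h
    obtain ⟨j'', hj''⟩ := adj_exists_ne (g.map_rel_iff.mpr hadj)
    have : j'' = j := rel_unique hP hQ g ⟨_, _, hadj, hdiff, hj''⟩ hrel
    subst this
    exact ⟨hj'', (adj_spec (g.map_rel_iff.mpr hadj) hj'').2⟩
  -- coordinates other than j are frozen on the whole i-layer of v₀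
  have coords_const : ∀ (a : W i) (j' : κ), j' ≠ j →
      g (update v₀ i a) j' = g v₀ j' := by
    have main : ∀ {a c : W i} (p : (P i).Walk a c) (j' : κ), j' ≠ j →
        g (update v₀ i a) j' = g (update v₀ i c) j' := by
      intro a c p
      induction p with
      | nil => intro _ _; rfl
      | cons h p ih =>
          intro j' hj'
          exact ((upd_diff _ _ h).2 j' hj').trans (ih j' hj')
    intro a j' hj'
    have := main (((hP i).1 (v₀ i) a).some) j' hj'
    rw [Function.update_eq_self] at this
    exact this.symm
  refine ⟨fun a => g (update v₀ i a) j, ?_, ?_⟩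
  · intro a b hab
    have hfun : g (update v₀ i a) = g (update v₀ i b) := by
      funext j'
      by_cases h : j' = j
      · subst h; exact hab
      · rw [coords_const a j' h, coords_const b j' h]
    have := g.toEquiv.injective hfun
    have := congrFun this i
    rwa [update_self, update_self] at this
  · intro a b
    constructor
    · intro h
      exact (adj_spec (g.map_rel_iff.mpr (upd_adj a b h).1) (upd_diff a b h).1).1
    · intro h
      have hne : a ≠ b := by
        intro he
        rw [he] at h
        exact (Q j).loopless.irrefl _ h
      have ht : update (g (update v₀ i a)) j (g (update v₀ i b) j) = g (update v₀ i b) := by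
        funext j'
        by_cases hj' : j' = j
        · subst hj'; rw [update_self]
        · rw [update_of_ne hj', coords_const a j' hj', coords_const b j' hj']
      have hadjQ : (BPF Q).Adj (g (update v₀ i a)) (g (update v₀ i b)) := by
        rw [← ht]
        exact adj_update h
      have hadjP : (BPF P).Adj (update v₀ i a) (update v₀ i b) := g.map_rel_iff.mp hadjQ
      have hdiff : update v₀ i a i ≠ update v₀ i b i := by
        rw [update_self, update_self]; exact hne
      have := (adj_spec hadjP hdiff).1
      rwa [update_self, update_self] at this
end unique

section uniqueFin

/-- Uniqueness of prime factorizations, for two box-product-family decompositions. -/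
theorem bpf_unique {k l : ℕ} {W : Fin k → Type} {X : Fin l → Type}
    [∀ i, Fintype (W i)] [∀ j, Fintype (X j)]
    {P : ∀ i, SimpleGraph (W i)} {Q : ∀ j, SimpleGraph (X j)}
    (hP : ∀ i, (P i).IsPrime) (hQ : ∀ j, (Q j).IsPrime)
    (g : BPF P ≃g BPF Q) :
    k = l ∧ ∃ σ : Fin k ≃ Fin l, ∀ i, Nonempty (P i ≃g Q (σ i)) := by
  classical
  have R1 : ∀ i, ∃ j, Rel g i j := rel_exists hP g
  have R1' : ∀ j, ∃ i, Rel g.symm j i := rel_exists hQ g.symm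
  set σ0 : Fin k → Fin l := fun i => (R1 i).choose with hσ0def
  have hσ0 : ∀ i, Rel g i (σ0 i) := fun i => (R1 i).choose_spec
  have hinj : Function.Injective σ0 := by
    intro i i' he
    have h1 : Rel g.symm (σ0 i) i := rel_symm g (hσ0 i)
    have h2 : Rel g.symm (σ0 i) i' := he ▸ rel_symm g (hσ0 i')
    exact rel_unique hQ hP g.symm h1 h2
  have hsurj : Function.Surjective σ0 := by
    intro j
    obtain ⟨i, hi⟩ := R1' j
    exact ⟨i, rel_unique hP hQ g (hσ0 i) (rel_symm₂ g hi)⟩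
  set σ : Fin k ≃ Fin l := Equiv.ofBijective σ0 ⟨hinj, hsurj⟩ with hσdef
  have hkl : k = l := by
    have := Fintype.card_congr σ
    simpa using this
  refine ⟨hkl, σ, fun i => ?_⟩
  obtain ⟨φ, hφinj, hφadj⟩ := factor_emb hP hQ g (hσ0 i)
  obtain ⟨ψ, hψinj, _⟩ := factor_emb hQ hP g.symm (rel_symm g (hσ0 i))
  have hcard : Fintype.card (W i) = Fintype.card (X (σ0 i)) :=
    le_antisymm (Fintype.card_le_of_injective φ hφinj)
      (Fintype.card_le_of_injective ψ hψinj)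
  have hbij : Function.Bijective φ :=
    (Fintype.bijective_iff_injective_and_card φ).mpr ⟨hφinj, hcard⟩
  exact ⟨⟨Equiv.ofBijective φ hbij, fun {a b} => (hφadj a b).symm⟩⟩

end uniqueFin


section existence

/-- A graph is isomorphic to the box product of the one-element family. -/
def isoSingle {V : Type} (G : SimpleGraph V) : G ≃g BPF (fun _ : Fin 1 => G) where
  toFun v := fun _ => v
  invFun u := u 0
  left_inv v := rfl
  right_inv u := by
    funext i
    rw [Subsingleton.elim i 0]
  map_rel_iff' := by
    intro a b
    constructor
    · rintro ⟨j, hadj, _⟩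
      exact hadj
    · intro h
      exact ⟨0, h, fun i hi => absurd (Subsingleton.elim i 0) hi⟩

/-- Box products of isomorphic graphs are isomorphic. -/
def boxProdCongr {α β γ δ : Type} {A : SimpleGraph α} {B : SimpleGraph β}
    {C : SimpleGraph γ} {D : SimpleGraph δ} (f : A ≃g B) (h : C ≃g D) :
    A.boxProd C ≃g B.boxProd D where
  toEquiv := Equiv.prodCongr f.toEquiv h.toEquiv
  map_rel_iff' := by
    intro a b
    show (B.boxProd D).Adj (f a.1, h a.2) (f b.1, h b.2) ↔ _
    simp only [boxProd_adj, f.map_rel_iff, h.map_rel_iff, EmbeddingLike.apply_eq_iff_eq]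

/-- Associativity of the box product. -/
def boxProdAssoc {α β γ : Type} (A : SimpleGraph α) (B : SimpleGraph β) (C : SimpleGraph γ) :
    (A.boxProd B).boxProd C ≃g A.boxProd (B.boxProd C) where
  toEquiv := Equiv.prodAssoc α β γ
  map_rel_iff' := by
    rintro ⟨⟨a1, a2⟩, a3⟩ ⟨⟨b1, b2⟩, b3⟩
    show (A.boxProd (B.boxProd C)).Adj (a1, (a2, a3)) (b1, (b2, b3)) ↔ _
    simp only [boxProd_adj, Prod.mk.injEq]
    tauto

/-- A box product with a one-point graph is isomorphic to the other factor. -/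
noncomputable def boxProdTriv {α β : Type} [Fintype β] (A : SimpleGraph α) (B : SimpleGraph β)
    (hcard : Fintype.card β = 1) : A.boxProd B ≃g A := by
  haveI : Unique β := Fintype.card_eq_one_iff_nonempty_unique.mp hcard |>.some
  exact {
    toEquiv := Equiv.prodUnique α β
    map_rel_iff' := by
      rintro ⟨a1, a2⟩ ⟨b1, b2⟩
      show A.Adj a1 b1 ↔ (A.boxProd B).Adj (a1, a2) (b1, b2)
      rw [boxProd_adj]
      constructor
      · intro h
        exact Or.inl ⟨h, Subsingleton.elim _ _⟩
      · rintro (⟨h, _⟩ | ⟨h, _⟩)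
        · exact h
        · exact absurd (Subsingleton.elim a2 b2) h.ne }

variable {n : ℕ} {α : Type} {Wt : Fin n → Type}

/-- The type family obtained by prepending `α`. -/
def consT (α : Type) (Wt : Fin n → Type) : Fin (n + 1) → Type :=
  fun i => Fin.cases (motive := fun _ => Type) α Wt i

/-- The graph family obtained by prepending `Ph`. -/
def consG (Ph : SimpleGraph α) (Pt : ∀ m, SimpleGraph (Wt m)) :
    ∀ i, SimpleGraph (consT α Wt i) :=
  fun i => Fin.cases (motive := fun i => SimpleGraph (consT α Wt i)) Ph Pt i

instance consTFintype [Fintype α] [∀ m, Fintype (Wt m)] (i : Fin (n + 1)) :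
    Fintype (consT α Wt i) := by
  induction i using Fin.cases with
  | zero => exact (inferInstance : Fintype α)
  | succ m => exact (inferInstance : Fintype (Wt m))

/-- Splitting off the head factor of a box product family. -/
def consSplit (Ph : SimpleGraph α) (Pt : ∀ m, SimpleGraph (Wt m)) :
    BPF (consG Ph Pt) ≃g Ph.boxProd (BPF Pt) where
  toFun u := (u 0, fun m => u m.succ)
  invFun p := fun i => Fin.cases (motive := fun i => consT α Wt i) p.1 p.2 i
  left_inv u := by
    funext i
    induction i using Fin.cases with
    | zero => rfl
    | succ m => rfl
  right_inv p := rfl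
  map_rel_iff' := by
    intro u v
    show (Ph.boxProd (BPF Pt)).Adj (u 0, fun m => u m.succ) (v 0, fun m => v m.succ) ↔ _
    rw [boxProd_adj]
    constructor
    · rintro (⟨hadj, heq⟩ | ⟨⟨m, hadj, heq⟩, heq0⟩)
      · refine ⟨0, hadj, fun i hi => ?_⟩
        rcases Fin.eq_zero_or_eq_succ i with h | ⟨m, h⟩
        · exact absurd h hi
        · subst h
          exact congrFun heq m
      · refine ⟨m.succ, hadj, fun i hi => ?_⟩
        rcases Fin.eq_zero_or_eq_succ i with h | ⟨m', h⟩
        · subst h; exact heq0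
        · subst h
          exact heq m' (fun he => hi (by rw [he]))
    · rintro ⟨j, hadj, heq⟩
      rcases Fin.eq_zero_or_eq_succ j with h | ⟨m, h⟩
      · subst h
        refine Or.inl ⟨hadj, funext fun m => heq m.succ (Fin.succ_ne_zero m)⟩
      · subst h
        refine Or.inr ⟨⟨m, hadj, fun m' hm' => heq m'.succ (fun he => hm' (Fin.succ_injective _ he))⟩,
          heq 0 (Fin.succ_ne_zero m).symm⟩

/-- A graph is isomorphic to its box product with a one-point graph. -/
def boxProdPUnit {α : Type} (A : SimpleGraph α) :
    A ≃g A.boxProd (⊥ : SimpleGraph PUnit) where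
  toFun v := (v, PUnit.unit)
  invFun p := p.1
  left_inv v := rfl
  right_inv p := rfl
  map_rel_iff' := by
    intro a b
    show (A.boxProd ⊥).Adj (a, PUnit.unit) (b, PUnit.unit) ↔ _
    rw [boxProd_adj]
    constructor
    · rintro (⟨h, _⟩ | ⟨h, _⟩)
      · exact h
      · exact absurd h (by simp)
    · intro h
      exact Or.inl ⟨h, rfl⟩

/-- Every connected graph on at least two vertices splits off a prime factor. -/
theorem exists_prime_split : ∀ (n : ℕ) {V : Type} [Fintype V] (G : SimpleGraph V),
    Fintype.card V = n → G.Connected → 2 ≤ Fintype.card V →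
    ∃ (V₁ : Type) (_ : Fintype V₁) (H₁ : SimpleGraph V₁) (V₂ : Type) (_ : Fintype V₂)
      (H₂ : SimpleGraph V₂), H₁.IsPrime ∧ H₂.Connected ∧
      Fintype.card V₂ < Fintype.card V ∧ Nonempty (G ≃g H₁.boxProd H₂) := by
  intro n
  induction n using Nat.strong_induction_on with
  | _ n ih =>
    intro V instV G hcard hG hV
    by_cases hprime : G.IsPrime
    · refine ⟨V, instV, G, PUnit, inferInstance, ⊥, hprime, ?_, by simp; omega, ⟨boxProdPUnit G⟩⟩
      exact ⟨preconnected_bot⟩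
    · rw [SimpleGraph.IsPrime] at hprime
      push_neg at hprime
      obtain ⟨V₁, V₂, inst₁, inst₂, H₁, H₂, hiso, hc₁, hc₂⟩ := hprime hG hV
      obtain ⟨e⟩ := hiso
      have hcards : Fintype.card V = Fintype.card V₁ * Fintype.card V₂ := by
        rw [Fintype.card_congr e.toEquiv, Fintype.card_prod]
      have h1 : Fintype.card V₁ ≠ 0 := by
        intro h
        rw [h, zero_mul] at hcards
        omega
      have h2 : Fintype.card V₂ ≠ 0 := by
        intro h
        rw [h, mul_zero] at hcards
        omega
      have hc₁2 : 2 ≤ Fintype.card V₁ := by omega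
      have hc₂2 : 2 ≤ Fintype.card V₂ := by omega
      have hconn : (H₁.boxProd H₂).Connected := e.connected_iff.mp hG
      have hH₁ : H₁.Connected := (connected_boxProd.mp hconn).1
      have hH₂ : H₂.Connected := (connected_boxProd.mp hconn).2
      have hlt₁ : Fintype.card V₁ < n := by nlinarith
      obtain ⟨U₁, iU₁, K₁, U₂, iU₂, K₂, hK₁, hK₂, hKlt, ⟨e'⟩⟩ :=
        ih (Fintype.card V₁) hlt₁ H₁ rfl hH₁ hc₁2
      refine ⟨U₁, iU₁, K₁, U₂ × V₂, inferInstance, K₂.boxProd H₂, hK₁,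
        connected_boxProd.mpr ⟨hK₂, hH₂⟩, ?_, ?_⟩
      · have : Fintype.card (U₂ × V₂) = Fintype.card U₂ * Fintype.card V₂ :=
          Fintype.card_prod _ _
        have hle : Fintype.card U₂ * Fintype.card V₂ < Fintype.card V₁ * Fintype.card V₂ := by
          have h2' : 0 < Fintype.card V₂ := by omega
          exact (Nat.mul_lt_mul_right h2').mpr hKlt
        omega
      · exact ⟨(e.trans (boxProdCongr e' (Iso.refl (G := H₂)))).trans (boxProdAssoc K₁ K₂ H₂)⟩

/-- Existence of a prime factorization. -/
theorem exists_factorization : ∀ (n : ℕ) {V : Type} [Fintype V] (G : SimpleGraph V),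
    Fintype.card V = n → G.Connected → 2 ≤ Fintype.card V →
    ∃ (k : ℕ) (W : Fin k → Type) (_ : ∀ i, Fintype (W i)) (P : ∀ i, SimpleGraph (W i)),
      (∀ i, (P i).IsPrime) ∧ Nonempty (G ≃g BPF P) := by
  intro n
  induction n using Nat.strong_induction_on with
  | _ n ih =>
    intro V instV G hcard hG hV
    obtain ⟨V₁, iV₁, H₁, V₂, iV₂, H₂, hH₁, hH₂conn, hlt, ⟨e⟩⟩ :=
      exists_prime_split (Fintype.card V) G rfl hG hV
    by_cases h2 : Fintype.card V₂ = 1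
    · refine ⟨1, fun _ => V₁, fun _ => iV₁, fun _ => H₁, fun _ => hH₁, ?_⟩
      exact ⟨(e.trans (boxProdTriv H₁ H₂ h2)).trans (isoSingle H₁)⟩
    · have h1 : Fintype.card V₂ ≠ 0 := by
        have : Nonempty V₂ := hH₂conn.nonempty
        simp [Fintype.card_ne_zero]
      have hV₂ : 2 ≤ Fintype.card V₂ := by omega
      obtain ⟨k, Wt, iWt, Pt, hPt, ⟨e'⟩⟩ :=
        ih (Fintype.card V₂) (by omega) H₂ rfl hH₂conn hV₂
      refine ⟨k + 1, consT V₁ Wt, fun i => ?_, consG H₁ Pt, fun i => ?_, ?_⟩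
      · exact consTFintype (α := V₁) (Wt := Wt) i
      · induction i using Fin.cases with
        | zero => exact hH₁
        | succ m => exact hPt m
      · exact ⟨(e.trans (boxProdCongr (Iso.refl (G := H₁)) e')).trans (consSplit H₁ Pt).symm⟩

end existence
end Sabidussi

/-- **Unique factorization of connected graphs into prime graphs** (Sabidussi).
Every connected finite simple graph with at least two vertices is isomorphic to
a box product of finitely many prime graphs, and this factorization is unique
up to reordering and isomorphism of the factors. -/
theorem prime_factorization_exists_unique
    {V : Type} [Fintype V] (G : SimpleGraph V) (hG : G.Connected)
    (hV : 2 ≤ Fintype.card V) :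
    (∃ (k : ℕ) (W : Fin k → Type) (_ : ∀ i, Fintype (W i))
        (P : ∀ i, SimpleGraph (W i)),
        (∀ i, (P i).IsPrime) ∧ Nonempty (G ≃g boxProdFamily P)) ∧
    (∀ (k l : ℕ) (W : Fin k → Type) (_ : ∀ i, Fintype (W i))
        (P : ∀ i, SimpleGraph (W i))
        (X : Fin l → Type) (_ : ∀ j, Fintype (X j))
        (Q : ∀ j, SimpleGraph (X j)),
        (∀ i, (P i).IsPrime) → (∀ j, (Q j).IsPrime) →
        Nonempty (G ≃g boxProdFamily P) → Nonempty (G ≃g boxProdFamily Q) →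
        k = l ∧ ∃ σ : Fin k ≃ Fin l, ∀ i, Nonempty (P i ≃g Q (σ i))) := by
  constructor
  · obtain ⟨k, W, iW, P, hP, hiso⟩ :=
      Sabidussi.exists_factorization (Fintype.card V) G rfl hG hV
    exact ⟨k, W, iW, P, hP, hiso⟩
  · intro k l W iW P X iX Q hP hQ hisoP hisoQ
    obtain ⟨eP⟩ := hisoP
    obtain ⟨eQ⟩ := hisoQ
    exact @Sabidussi.bpf_unique k l W X iW iX P Q hP hQ (eP.symm.trans eQ)
end

section
/- If G₁ and G₂ are connected finite simple graphs that are relatively prime with respect to the box product, then the automorphism group of G₁ □ G₂ is isomorphic (as a group) to the direct product Aut(G₁) × Aut(G₂). -/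
open SimpleGraph

/-- The group of automorphisms of a simple graph, under composition. -/
instance SimpleGraph.autGroup {V : Type*} (G : SimpleGraph V) : Group (G ≃g G) where
  mul f g := g.trans f
  one := Iso.refl
  inv := Iso.symm
  mul_assoc _ _ _ := rfl
  one_mul f := RelIso.ext fun _ => rfl
  mul_one f := RelIso.ext fun _ => rfl
  inv_mul_cancel f := RelIso.ext fun x => f.toEquiv.symm_apply_apply x

/-- Two graphs are relatively prime with respect to the box product if any
common box-product factor is a single vertex. -/
def SimpleGraph.RelPrime {V₁ V₂ : Type} [Fintype V₁] [Fintype V₂]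
    (G : SimpleGraph V₁) (H : SimpleGraph V₂) : Prop :=
  ∀ (A B C : Type) [Fintype A] [Fintype B] [Fintype C]
    (G₁ : SimpleGraph A) (H₁ : SimpleGraph B) (J : SimpleGraph C),
    Nonempty (G ≃g G₁.boxProd J) → Nonempty (H ≃g H₁.boxProd J) →
    Fintype.card C = 1

namespace SabidussiAux


variable {α β : Type*} {G : SimpleGraph α} {H : SimpleGraph β}

lemma iso_dist_le' {α β : Type*} {G : SimpleGraph α} {H : SimpleGraph β}
    (φ : G ≃g H) {u v : α} (hr : G.Reachable u v) :
    H.dist (φ u) (φ v) ≤ G.dist u v := by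
  obtain ⟨p, hp⟩ := hr.exists_walk_length_eq_dist
  calc H.dist (φ u) (φ v) ≤ (p.map φ.toHom).length := dist_le _
    _ = p.length := p.length_map _
    _ = _ := hp

lemma iso_dist_eq {α β : Type*} {G : SimpleGraph α} {H : SimpleGraph β}
    (φ : G ≃g H) {u v : α} (hr : G.Reachable u v) :
    H.dist (φ u) (φ v) = G.dist u v := by
  refine le_antisymm (iso_dist_le' φ hr) ?_
  have h2 := iso_dist_le' φ.symm (hr.map φ.toHom)
  simpa using h2

lemma boxProd_dist_ge (hG : G.Connected) (hH : H.Connected) {x y : α × β}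
    (w : (G □ H).Walk x y) :
    G.dist x.1 y.1 + H.dist x.2 y.2 ≤ w.length := by
  induction w with
  | nil => simp
  | @cons u v z hadj w ih =>
    rw [Walk.length_cons]
    rcases hadj with ⟨hl, h2⟩ | ⟨hr, h1⟩
    · have e1 : G.dist u.1 z.1 ≤ G.dist u.1 v.1 + G.dist v.1 z.1 := hG.dist_triangle
      have e2 : G.dist u.1 v.1 = 1 := dist_eq_one_iff_adj.mpr hl
      rw [h2]
      omega
    · have e1 : H.dist u.2 z.2 ≤ H.dist u.2 v.2 + H.dist v.2 z.2 := hH.dist_triangle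
      have e2 : H.dist u.2 v.2 = 1 := dist_eq_one_iff_adj.mpr hr
      rw [h1]
      omega

lemma boxProd_dist (hG : G.Connected) (hH : H.Connected) (x y : α × β) :
    (G □ H).dist x y = G.dist x.1 y.1 + H.dist x.2 y.2 := by
  refine le_antisymm ?_ ?_
  · obtain ⟨p, hp⟩ := (hG.preconnected x.1 y.1).exists_walk_length_eq_dist
    obtain ⟨q, hq⟩ := (hH.preconnected x.2 y.2).exists_walk_length_eq_dist
    obtain ⟨a, b⟩ := x
    obtain ⟨c, d⟩ := y
    have := dist_le ((p.boxProdLeft H b).append (q.boxProdRight G c))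
    have h1 : (p.boxProdLeft H b).length = p.length := Walk.length_map _ _
    have h2 : (q.boxProdRight G c).length = q.length := Walk.length_map _ _
    rw [Walk.length_append, h1, h2, hp, hq] at this
    exact this
  · obtain ⟨w, hw⟩ := ((hG.boxProd hH).preconnected x y).exists_walk_length_eq_dist
    rw [← hw]
    exact boxProd_dist_ge hG hH w

/-- The image of a "row" under an automorphism of a box product is a box
(closed under taking "corners"). -/
lemma mem_box_row (hG : G.Connected) (hH : H.Connected) (φ : G.boxProd H ≃g G.boxProd H) {b : β}
    {x y : α × β} (hx : x ∈ φ '' {z | z.2 = b}) (hy : y ∈ φ '' {z | z.2 = b}) :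
    (x.1, y.2) ∈ φ '' {z | z.2 = b} := by
  obtain ⟨u, hu, rfl⟩ := hx
  obtain ⟨v, hv, rfl⟩ := hy
  have hXc : (G □ H).Connected := hG.boxProd hH
  set e : α × β := φ.symm ((φ u).1, (φ v).2) with he
  have hA : (G □ H).dist u e = (G □ H).dist (φ u) ((φ u).1, (φ v).2) := by
    have := iso_dist_eq φ.symm (hXc.preconnected (φ u) ((φ u).1, (φ v).2))
    simpa [he] using this
  have hB : (G □ H).dist e v = (G □ H).dist ((φ u).1, (φ v).2) (φ v) := by
    have := iso_dist_eq φ.symm (hXc.preconnected ((φ u).1, (φ v).2) (φ v))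
    simpa [he] using this
  have hC : (G □ H).dist u v = (G □ H).dist (φ u) (φ v) :=
    (iso_dist_eq φ (hXc.preconnected u v)).symm
  rw [boxProd_dist hG hH, boxProd_dist hG hH] at hA hB hC
  simp only [SimpleGraph.dist_self] at hA hB
  have htri : G.dist u.1 v.1 ≤ G.dist u.1 e.1 + G.dist e.1 v.1 := hG.dist_triangle
  have hu' : u.2 = b := hu
  have hv' : v.2 = b := hv
  have huv2 : H.dist u.2 v.2 = 0 := by rw [hu', hv', SimpleGraph.dist_self]
  have h0 : H.dist u.2 e.2 = 0 := by omega
  have he2 : e.2 = b := by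
    have := (hH.dist_eq_zero_iff).mp h0
    rw [← this, hu']
  refine ⟨e, he2, ?_⟩
  rw [he]
  exact φ.apply_symm_apply _

/-- Same for columns. -/
lemma mem_box_col (hG : G.Connected) (hH : H.Connected) (φ : G.boxProd H ≃g G.boxProd H) {c : α}
    {x y : α × β} (hx : x ∈ φ '' {z | z.1 = c}) (hy : y ∈ φ '' {z | z.1 = c}) :
    (x.1, y.2) ∈ φ '' {z | z.1 = c} := by
  obtain ⟨u, hu, rfl⟩ := hx
  obtain ⟨v, hv, rfl⟩ := hy
  have hXc : (G □ H).Connected := hG.boxProd hH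
  set e : α × β := φ.symm ((φ u).1, (φ v).2) with he
  have hA : (G □ H).dist u e = (G □ H).dist (φ u) ((φ u).1, (φ v).2) := by
    have := iso_dist_eq φ.symm (hXc.preconnected (φ u) ((φ u).1, (φ v).2))
    simpa [he] using this
  have hB : (G □ H).dist e v = (G □ H).dist ((φ u).1, (φ v).2) (φ v) := by
    have := iso_dist_eq φ.symm (hXc.preconnected ((φ u).1, (φ v).2) (φ v))
    simpa [he] using this
  have hC : (G □ H).dist u v = (G □ H).dist (φ u) (φ v) :=
    (iso_dist_eq φ (hXc.preconnected u v)).symm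
  rw [boxProd_dist hG hH, boxProd_dist hG hH] at hA hB hC
  simp only [SimpleGraph.dist_self] at hA hB
  have htri : H.dist u.2 v.2 ≤ H.dist u.2 e.2 + H.dist e.2 v.2 := hH.dist_triangle
  have hu' : u.1 = c := hu
  have hv' : v.1 = c := hv
  have huv1 : G.dist u.1 v.1 = 0 := by rw [hu', hv', SimpleGraph.dist_self]
  have h0 : G.dist u.1 e.1 = 0 := by omega
  have he1 : e.1 = c := by
    have := (hG.dist_eq_zero_iff).mp h0
    rw [← this, hu']
  refine ⟨e, he1, ?_⟩
  rw [he]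
  exact φ.apply_symm_apply _

/-- Congruence of box products. -/
def boxProdCongr {α₁ β₁ α₂ β₂ : Type*} {A₁ : SimpleGraph α₁} {B₁ : SimpleGraph β₁}
    {A₂ : SimpleGraph α₂} {B₂ : SimpleGraph β₂} (i : A₁ ≃g A₂) (j : B₁ ≃g B₂) :
    A₁.boxProd B₁ ≃g A₂.boxProd B₂ :=
  ⟨Equiv.prodCongr i.toEquiv j.toEquiv, fun {x y} => by
    simp [boxProd_adj, Equiv.prodCongr_apply, i.map_rel_iff, j.map_rel_iff,
      EmbeddingLike.apply_eq_iff_eq]⟩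

/-- Key lemma: the second coordinate of the image of an automorphism is
constant on rows. -/
lemma row_snd_const {V₁ V₂ : Type} [Fintype V₁] [Fintype V₂]
    {G : SimpleGraph V₁} {H : SimpleGraph V₂}
    (hG : G.Connected) (hH : H.Connected) (hrp : G.RelPrime H)
    (φ : G.boxProd H ≃g G.boxProd H) (a a' : V₁) (b : V₂) :
    (φ (a, b)).2 = (φ (a', b)).2 := by
  classical
  set L : Set (V₁ × V₂) := φ '' {z | z.2 = b} with hLdef
  set c₀ : V₁ := (φ (a, b)).1 with hc₀
  set N : Set (V₁ × V₂) := φ.symm '' {z | z.1 = c₀} with hNdef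
  have hmemL : ∀ u : V₁, φ (u, b) ∈ L := fun u => ⟨(u, b), rfl, rfl⟩
  have hboxL : ∀ x ∈ L, ∀ y ∈ L, (x.1, y.2) ∈ L := fun x hx y hy =>
    mem_box_row hG hH φ hx hy
  have haN : (a, b) ∈ N := ⟨φ (a, b), rfl, φ.symm_apply_apply _⟩
  have hboxN : ∀ x ∈ N, ∀ y ∈ N, (x.1, y.2) ∈ N := fun x hx y hy =>
    mem_box_col hG hH φ.symm hx hy
  set P : Set V₁ := Prod.fst '' L with hPdef
  set Q : Set V₂ := Prod.snd '' L with hQdef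
  set R : Set V₁ := Prod.fst '' N with hRdef
  set S : Set V₂ := Prod.snd '' N with hSdef
  haveI : Fintype ↥P := Fintype.ofFinite _
  haveI : Fintype ↥Q := Fintype.ofFinite _
  haveI : Fintype ↥R := Fintype.ofFinite _
  haveI : Fintype ↥S := Fintype.ofFinite _
  have memP : ∀ u : V₁, (φ (u, b)).1 ∈ P := fun u => ⟨_, hmemL u, rfl⟩
  have memQ : ∀ u : V₁, (φ (u, b)).2 ∈ Q := fun u => ⟨_, hmemL u, rfl⟩
  have memR : ∀ w : V₂, (φ.symm (c₀, w)).1 ∈ R := fun w => ⟨_, ⟨(c₀, w), rfl, rfl⟩, rfl⟩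
  have memS : ∀ w : V₂, (φ.symm (c₀, w)).2 ∈ S := fun w => ⟨_, ⟨(c₀, w), rfl, rfl⟩, rfl⟩
  have hLpair : ∀ p ∈ P, ∀ q ∈ Q, (p, q) ∈ L := by
    rintro p ⟨x, hxL, rfl⟩ q ⟨y, hyL, rfl⟩
    exact hboxL x hxL y hyL
  have hNpair : ∀ r ∈ R, ∀ s ∈ S, (r, s) ∈ N := by
    rintro r ⟨x, hxN, rfl⟩ s ⟨y, hyN, rfl⟩
    exact hboxN x hxN y hyN
  have hsnd : ∀ p ∈ P, ∀ q ∈ Q, (φ.symm (p, q)).2 = b := by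
    intro p hp q hq
    obtain ⟨z, hz, hφz⟩ := hLpair p hp q hq
    have : φ.symm (p, q) = z := by rw [← hφz, φ.symm_apply_apply]
    rw [this]; exact hz
  have hfst : ∀ r ∈ R, ∀ s ∈ S, (φ (r, s)).1 = c₀ := by
    intro r hr s hs
    obtain ⟨z, hz, hφz⟩ := hNpair r hr s hs
    have : φ (r, s) = z := by rw [← hφz, φ.apply_symm_apply]
    rw [this]; exact hz
  -- The equivalence `V₁ ≃ P × Q`.
  let e : V₁ ≃ (↥P × ↥Q) :=
  { toFun := fun u => (⟨(φ (u, b)).1, memP u⟩, ⟨(φ (u, b)).2, memQ u⟩)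
    invFun := fun pq => (φ.symm (pq.1.1, pq.2.1)).1
    left_inv := fun u => by simp
    right_inv := fun pq => by
      obtain ⟨⟨p, hp⟩, ⟨q, hq⟩⟩ := pq
      have h2 : (φ.symm (p, q)).2 = b := hsnd p hp q hq
      have h3 : φ ((φ.symm (p, q)).1, b) = (p, q) := by
        rw [← h2, Prod.mk.eta]
        exact φ.apply_symm_apply _
      refine Prod.ext (Subtype.ext ?_) (Subtype.ext ?_) <;> simp [h3] }
  have isoG : G ≃g (G.induce P) □ (H.induce Q) :=
  { toEquiv := e
    map_rel_iff' := by
      intro u v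
      have key : G.Adj u v ↔ (G □ H).Adj (φ (u, b)) (φ (v, b)) := by
        rw [φ.map_rel_iff]; exact boxProd_adj_left.symm
      rw [key]
      show ((G.induce P) □ (H.induce Q)).Adj
        (⟨(φ (u, b)).1, _⟩, ⟨(φ (u, b)).2, _⟩) (⟨(φ (v, b)).1, _⟩, ⟨(φ (v, b)).2, _⟩) ↔ _
      simp [boxProd_adj, Subtype.ext_iff] }
  -- The equivalence `V₂ ≃ R × S`.
  let e' : V₂ ≃ (↥R × ↥S) :=
  { toFun := fun w => (⟨(φ.symm (c₀, w)).1, memR w⟩, ⟨(φ.symm (c₀, w)).2, memS w⟩)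
    invFun := fun rs => (φ (rs.1.1, rs.2.1)).2
    left_inv := fun w => by simp
    right_inv := fun rs => by
      obtain ⟨⟨r, hr⟩, ⟨s, hs⟩⟩ := rs
      have h2 : (φ (r, s)).1 = c₀ := hfst r hr s hs
      have h3 : φ.symm (c₀, (φ (r, s)).2) = (r, s) := by
        rw [← h2, Prod.mk.eta]
        exact φ.symm_apply_apply _
      refine Prod.ext (Subtype.ext ?_) (Subtype.ext ?_) <;> simp [h3] }
  have isoH0 : H ≃g (G.induce R) □ (H.induce S) :=
  { toEquiv := e'
    map_rel_iff' := by
      intro w w'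
      have key : H.Adj w w' ↔ (G □ H).Adj (φ.symm (c₀, w)) (φ.symm (c₀, w')) := by
        rw [φ.symm.map_rel_iff]; exact boxProd_adj_right.symm
      rw [key]
      show ((G.induce R) □ (H.induce S)).Adj
        (⟨(φ.symm (c₀, w)).1, _⟩, ⟨(φ.symm (c₀, w)).2, _⟩)
        (⟨(φ.symm (c₀, w')).1, _⟩, ⟨(φ.symm (c₀, w')).2, _⟩) ↔ _
      simp [boxProd_adj, Subtype.ext_iff] }
  -- The isomorphism between `G.induce R` and `H.induce Q`.
  have hRb : ∀ r ∈ R, (r, b) ∈ N := by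
    rintro r ⟨z, hz, rfl⟩
    exact hboxN z hz (a, b) haN
  have hfstb : ∀ r ∈ R, (φ (r, b)).1 = c₀ := by
    intro r hr
    obtain ⟨w, hw, hs⟩ := hRb r hr
    have : φ (r, b) = w := by rw [← hs, φ.apply_symm_apply]
    rw [this]; exact hw
  have hQc : ∀ q ∈ Q, (c₀, q) ∈ L := by
    rintro q ⟨y, hy, rfl⟩
    exact hboxL _ (hmemL a) y hy
  have hsndb : ∀ q ∈ Q, (φ.symm (c₀, q)).2 = b := by
    intro q hq
    obtain ⟨z, hz, hφz⟩ := hQc q hq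
    have : φ.symm (c₀, q) = z := by rw [← hφz, φ.symm_apply_apply]
    rw [this]; exact hz
  have isoRQ : (G.induce R) ≃g (H.induce Q) :=
  { toFun := fun r => ⟨(φ (r.1, b)).2, memQ r.1⟩
    invFun := fun q => ⟨(φ.symm (c₀, q.1)).1, memR q.1⟩
    left_inv := fun r => by
      apply Subtype.ext
      have h1 := hfstb r.1 r.2
      show (φ.symm (c₀, (φ (r.1, b)).2)).1 = r.1
      rw [← h1, Prod.mk.eta, φ.symm_apply_apply]
    right_inv := fun q => by
      apply Subtype.ext
      have h2 := hsndb q.1 q.2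
      show (φ ((φ.symm (c₀, q.1)).1, b)).2 = q.1
      rw [← h2, Prod.mk.eta, φ.apply_symm_apply]
    map_rel_iff' := by
      intro r r'
      have k1 := hfstb r.1 r.2
      have k2 := hfstb r'.1 r'.2
      show H.Adj (φ (r.1, b)).2 (φ (r'.1, b)).2 ↔ G.Adj r.1 r'.1
      have t : (G □ H).Adj (φ (r.1, b)) (φ (r'.1, b)) ↔ G.Adj r.1 r'.1 := by
        rw [φ.map_rel_iff]; exact boxProd_adj_left
      rw [← t]
      constructor
      · intro hadj
        exact Or.inr ⟨hadj, k1.trans k2.symm⟩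
      · rintro (⟨h1, _⟩ | ⟨h1, _⟩)
        · rw [k1, k2] at h1
          exact absurd h1 (G.irrefl)
        · exact h1 }
  have i2 : H ≃g (H.induce S) □ (H.induce Q) :=
    isoH0.trans ((boxProdComm _ _).trans (boxProdCongr Iso.refl isoRQ))
  have hcard : Fintype.card ↥Q = 1 :=
    hrp ↥P ↥S ↥Q (G.induce P) (H.induce S) (H.induce Q) ⟨isoG⟩ ⟨i2⟩
  have hsub : ∀ x y : ↥Q, x = y := Fintype.card_le_one_iff.mp hcard.le
  have := hsub ⟨(φ (a, b)).2, memQ a⟩ ⟨(φ (a', b)).2, memQ a'⟩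
  exact congrArg Subtype.val this



variable {V₁ V₂ : Type} [Fintype V₁] [Fintype V₂]
    {G : SimpleGraph V₁} {H : SimpleGraph V₂}

lemma relPrime_symm (hrp : G.RelPrime H) : H.RelPrime G := by
  intro A B C iA iB iC GG HH J j1 j2
  exact hrp B A C HH GG J j2 j1

lemma col_fst_const (hG : G.Connected) (hH : H.Connected) (hrp : G.RelPrime H)
    (φ : G.boxProd H ≃g G.boxProd H) (a : V₁) (b b' : V₂) :
    (φ (a, b)).1 = (φ (a, b')).1 := by
  let ψ : H.boxProd G ≃g H.boxProd G := ((boxProdComm H G).trans φ).trans (boxProdComm G H)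
  have := row_snd_const hH hG (relPrime_symm hrp) ψ b b' a
  exact this

/-- The automorphism of `G` induced by an automorphism of `G □ H`. -/
def fstIso (hG : G.Connected) (hH : H.Connected) (hrp : G.RelPrime H) (b₀ : V₂)
    (φ : G.boxProd H ≃g G.boxProd H) : G ≃g G where
  toFun a := (φ (a, b₀)).1
  invFun a := (φ.symm (a, b₀)).1
  left_inv a := by
    have c1 : (φ.symm ((φ (a, b₀)).1, b₀)).1 = (φ.symm ((φ (a, b₀)).1, (φ (a, b₀)).2)).1 :=
      col_fst_const hG hH hrp φ.symm _ _ _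
    show (φ.symm ((φ (a, b₀)).1, b₀)).1 = a
    rw [c1, Prod.mk.eta, φ.symm_apply_apply]
  right_inv a := by
    have c1 : (φ ((φ.symm (a, b₀)).1, b₀)).1 = (φ ((φ.symm (a, b₀)).1, (φ.symm (a, b₀)).2)).1 :=
      col_fst_const hG hH hrp φ _ _ _
    show (φ ((φ.symm (a, b₀)).1, b₀)).1 = a
    rw [c1, Prod.mk.eta, φ.apply_symm_apply]
  map_rel_iff' := by
    intro a a'
    have k2 : (φ (a, b₀)).2 = (φ (a', b₀)).2 := row_snd_const hG hH hrp φ a a' b₀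
    have t : (G □ H).Adj (φ (a, b₀)) (φ (a', b₀)) ↔ G.Adj a a' := by
      rw [φ.map_rel_iff]; exact boxProd_adj_left
    show G.Adj (φ (a, b₀)).1 (φ (a', b₀)).1 ↔ G.Adj a a'
    rw [← t]
    constructor
    · intro hadj
      exact Or.inl ⟨hadj, k2⟩
    · rintro (⟨h1, _⟩ | ⟨h1, _⟩)
      · exact h1
      · rw [k2] at h1
        exact absurd h1 (H.irrefl)

/-- The automorphism of `H` induced by an automorphism of `G □ H`. -/
def sndIso (hG : G.Connected) (hH : H.Connected) (hrp : G.RelPrime H) (a₀ : V₁)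
    (φ : G.boxProd H ≃g G.boxProd H) : H ≃g H where
  toFun b := (φ (a₀, b)).2
  invFun b := (φ.symm (a₀, b)).2
  left_inv b := by
    have c1 : (φ.symm (a₀, (φ (a₀, b)).2)).2 = (φ.symm ((φ (a₀, b)).1, (φ (a₀, b)).2)).2 :=
      row_snd_const hG hH hrp φ.symm _ _ _
    show (φ.symm (a₀, (φ (a₀, b)).2)).2 = b
    rw [c1, Prod.mk.eta, φ.symm_apply_apply]
  right_inv b := by
    have c1 : (φ (a₀, (φ.symm (a₀, b)).2)).2 = (φ ((φ.symm (a₀, b)).1, (φ.symm (a₀, b)).2)).2 :=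
      row_snd_const hG hH hrp φ _ _ _
    show (φ (a₀, (φ.symm (a₀, b)).2)).2 = b
    rw [c1, Prod.mk.eta, φ.apply_symm_apply]
  map_rel_iff' := by
    intro b b'
    have k1 : (φ (a₀, b)).1 = (φ (a₀, b')).1 := col_fst_const hG hH hrp φ a₀ b b'
    have t : (G □ H).Adj (φ (a₀, b)) (φ (a₀, b')) ↔ H.Adj b b' := by
      rw [φ.map_rel_iff]; exact boxProd_adj_right
    show H.Adj (φ (a₀, b)).2 (φ (a₀, b')).2 ↔ H.Adj b b'
    rw [← t]
    constructor
    · intro hadj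
      exact Or.inr ⟨hadj, k1⟩
    · rintro (⟨h1, _⟩ | ⟨h1, _⟩)
      · rw [k1] at h1
        exact absurd h1 (G.irrefl)
      · exact h1


end SabidussiAux

open SabidussiAux

/-- (Sabidussi) If `G₁` and `G₂` are connected finite simple graphs that are
relatively prime with respect to the box product, then the automorphism group of
`G₁ □ G₂` is isomorphic to the direct product `Aut(G₁) × Aut(G₂)`. -/
theorem aut_boxProd_of_relPrime {V₁ V₂ : Type} [Fintype V₁] [Fintype V₂]
    (G₁ : SimpleGraph V₁) (G₂ : SimpleGraph V₂)
    (h₁ : G₁.Connected) (h₂ : G₂.Connected) (h : G₁.RelPrime G₂) :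
    Nonempty ((G₁.boxProd G₂ ≃g G₁.boxProd G₂) ≃* (G₁ ≃g G₁) × (G₂ ≃g G₂)) := by
  classical
  obtain ⟨a₀⟩ := h₁.nonempty
  obtain ⟨b₀⟩ := h₂.nonempty
  have rowc : ∀ (φ : G₁.boxProd G₂ ≃g G₁.boxProd G₂) (a a' : V₁) (b : V₂),
      (φ (a, b)).2 = (φ (a', b)).2 := fun φ => row_snd_const h₁ h₂ h φ
  have colc : ∀ (φ : G₁.boxProd G₂ ≃g G₁.boxProd G₂) (a : V₁) (b b' : V₂),
      (φ (a, b)).1 = (φ (a, b')).1 := fun φ => col_fst_const h₁ h₂ h φ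
  refine ⟨{ toFun := fun φ => (fstIso h₁ h₂ h b₀ φ, sndIso h₁ h₂ h a₀ φ),
            invFun := fun ij => boxProdCongr ij.1 ij.2,
            left_inv := ?_, right_inv := ?_, map_mul' := ?_ }⟩
  · intro φ
    apply RelIso.ext
    intro x
    show ((φ (x.1, b₀)).1, (φ (a₀, x.2)).2) = φ x
    have k1 : (φ (x.1, b₀)).1 = (φ (x.1, x.2)).1 := colc φ x.1 b₀ x.2
    have k2 : (φ (a₀, x.2)).2 = (φ (x.1, x.2)).2 := (rowc φ x.1 a₀ x.2).symm
    rw [Prod.mk.eta] at k1 k2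
    exact Prod.ext k1 k2
  · rintro ⟨i, j⟩
    refine Prod.ext ?_ ?_
    · exact RelIso.ext fun a => rfl
    · exact RelIso.ext fun b => rfl
  · intro φ φ'
    refine Prod.ext ?_ ?_
    · apply RelIso.ext
      intro a
      show (φ (φ' (a, b₀))).1 = (φ ((φ' (a, b₀)).1, b₀)).1
      have := colc φ (φ' (a, b₀)).1 (φ' (a, b₀)).2 b₀
      rw [Prod.mk.eta] at this
      exact this
    · apply RelIso.ext
      intro b
      show (φ (φ' (a₀, b))).2 = (φ (a₀, (φ' (a₀, b)).2)).2
      have := rowc φ (φ' (a₀, b)).1 a₀ (φ' (a₀, b)).2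
      rw [Prod.mk.eta] at this
      exact this
end

section
/- Let G₁ and G₂ be connected finite simple graphs with m and n vertices respectively that are relatively prime with respect to the box product. Then the number of simple graphs on the fixed vertex set {1,2,…,mn} that are isomorphic to G₁ □ G₂ equals (mn)! / (|Aut(G₁)| · |Aut(G₂)|). -/
open SimpleGraph

namespace BoxAux

variable {α β : Type} {G : SimpleGraph α} {H : SimpleGraph β}

lemma dist_add_le_walk (hG : G.Connected) (hH : H.Connected) :
    ∀ {x y : α × β} (w : (G □ H).Walk x y),
      G.dist x.1 y.1 + H.dist x.2 y.2 ≤ w.length := by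
  intro x y w
  induction w with
  | nil => simp
  | @cons u v z hadj p ih =>
    rw [SimpleGraph.Walk.length_cons]
    rcases hadj with ⟨h1, h2⟩ | ⟨h1, h2⟩
    · have t1 : G.dist u.1 z.1 ≤ G.dist u.1 v.1 + G.dist v.1 z.1 := hG.dist_triangle
      have t2 : G.dist u.1 v.1 = 1 := SimpleGraph.dist_eq_one_iff_adj.mpr h1
      rw [h2]
      omega
    · have t1 : H.dist u.2 z.2 ≤ H.dist u.2 v.2 + H.dist v.2 z.2 := hH.dist_triangle
      have t2 : H.dist u.2 v.2 = 1 := SimpleGraph.dist_eq_one_iff_adj.mpr h1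
      rw [h2]
      omega

lemma boxProd_dist (hG : G.Connected) (hH : H.Connected) (x y : α × β) :
    (G □ H).dist x y = G.dist x.1 y.1 + H.dist x.2 y.2 := by
  refine le_antisymm ?_ ?_
  · obtain ⟨x1, x2⟩ := x
    obtain ⟨y1, y2⟩ := y
    obtain ⟨p, hp⟩ := hG.exists_walk_length_eq_dist x1 y1
    obtain ⟨q, hq⟩ := hH.exists_walk_length_eq_dist x2 y2
    have hw := SimpleGraph.dist_le ((SimpleGraph.Walk.boxProdLeft H x2 p).append
      (SimpleGraph.Walk.boxProdRight G y1 q))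
    rw [SimpleGraph.Walk.length_append] at hw
    have l1 : (SimpleGraph.Walk.boxProdLeft H x2 p).length = p.length :=
      SimpleGraph.Walk.length_map _ _
    have l2 : (SimpleGraph.Walk.boxProdRight G y1 q).length = q.length :=
      SimpleGraph.Walk.length_map _ _
    rwa [l1, l2, hp, hq] at hw
  · have hc : (G □ H).Connected := SimpleGraph.connected_boxProd.mpr ⟨hG, hH⟩
    obtain ⟨w, hw⟩ := hc.exists_walk_length_eq_dist x y
    rw [← hw]
    exact dist_add_le_walk hG hH w

lemma iso_dist {α' β' : Type} {A : SimpleGraph α'} {B : SimpleGraph β'}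
    (hA : A.Connected) (f : A ≃g B) (u v : α') :
    B.dist (f u) (f v) = A.dist u v := by
  refine le_antisymm ?_ ?_
  · obtain ⟨p, hp⟩ := hA.exists_walk_length_eq_dist u v
    have := SimpleGraph.dist_le (p.map f.toHom)
    rwa [SimpleGraph.Walk.length_map, hp] at this
  · have hr : B.Reachable (f u) (f v) := ((hA u v).map f.toHom)
    obtain ⟨q, hq⟩ := hr.exists_walk_length_eq_dist
    have := SimpleGraph.dist_le ((q.map f.symm.toHom).copy (show _ = u by simp) (show _ = v by simp))
    rwa [SimpleGraph.Walk.length_copy, SimpleGraph.Walk.length_map, hq] at this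

lemma snd_const_of_geodesic (hG : G.Connected) (hH : H.Connected) {h : β} :
    ∀ {x y : α × β} (w : (G □ H).Walk x y), x.2 = h → y.2 = h →
      w.length ≤ G.dist x.1 y.1 → ∀ v ∈ w.support, v.2 = h := by
  intro x y w
  induction w with
  | nil =>
    intro hx _ _ v hv
    simp only [SimpleGraph.Walk.support_nil, List.mem_singleton] at hv
    subst hv; exact hx
  | @cons u v z hadj p ih =>
    intro hx hy hlen q hq
    rw [SimpleGraph.Walk.support_cons, List.mem_cons] at hq
    rcases hq with rfl | hq
    · exact hx
    rw [SimpleGraph.Walk.length_cons] at hlen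
    rcases hadj with ⟨h1, h2⟩ | ⟨h1, h2⟩
    · have t1 : G.dist u.1 z.1 ≤ G.dist u.1 v.1 + G.dist v.1 z.1 := hG.dist_triangle
      have t2 : G.dist u.1 v.1 = 1 := SimpleGraph.dist_eq_one_iff_adj.mpr h1
      exact ih (h2 ▸ hx) hy (by omega) q hq
    · exfalso
      have hd := SimpleGraph.dist_le p
      rw [boxProd_dist hG hH v z] at hd
      have hne : v.2 ≠ h := by rw [← hx]; exact h1.ne'
      have hpos : 0 < H.dist v.2 z.2 := by
        rw [hy]; exact hH.pos_dist_of_ne hne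
      have h2' : G.dist v.1 z.1 = G.dist u.1 z.1 := by rw [← h2]
      omega

variable (G H) in
/-- The image of a `G`-layer (row) under an automorphism. -/
def rowImg (φ : (G □ H) ≃g (G □ H)) (h₀ : β) : Set (α × β) := ⇑φ '' {p : α × β | p.2 = h₀}

variable (G H) in
/-- The image of an `H`-layer (column) under an automorphism. -/
def colImg (φ : (G □ H) ≃g (G □ H)) (g₀ : α) : Set (α × β) := ⇑φ '' {p : α × β | p.1 = g₀}

lemma rect_row (hG : G.Connected) (hH : H.Connected) (φ : (G □ H) ≃g (G □ H)) (h₀ : β)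
    {a c : α} {b d : β} (h1 : (a, b) ∈ rowImg G H φ h₀) (h2 : (c, d) ∈ rowImg G H φ h₀) :
    (a, d) ∈ rowImg G H φ h₀ := by
  obtain ⟨u, hu, hu'⟩ := h1
  obtain ⟨u', hu2, hu2'⟩ := h2
  have hX : (G □ H).Connected := SimpleGraph.connected_boxProd.mpr ⟨hG, hH⟩
  obtain ⟨q, hq⟩ := hH.exists_walk_length_eq_dist b d
  obtain ⟨p, hp⟩ := hG.exists_walk_length_eq_dist a c
  set w : (G □ H).Walk (a, b) (c, d) :=
    (SimpleGraph.Walk.boxProdRight G a q).append (SimpleGraph.Walk.boxProdLeft H d p) with hw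
  have wlen : w.length = H.dist b d + G.dist a c := by
    have l1 : (SimpleGraph.Walk.boxProdRight G a q).length = q.length :=
      SimpleGraph.Walk.length_map _ _
    have l2 : (SimpleGraph.Walk.boxProdLeft H d p).length = p.length :=
      SimpleGraph.Walk.length_map _ _
    rw [hw, SimpleGraph.Walk.length_append, l1, l2, hp, hq]
  set w' : (G □ H).Walk u u' :=
    (w.map φ.symm.toHom).copy (show _ = u by rw [← hu']; simp) (show _ = u' by rw [← hu2']; simp)
    with hw'
  have hle : w'.length ≤ G.dist u.1 u'.1 := by
    have e1 : (G □ H).dist (a, b) (c, d) = G.dist a c + H.dist b d := boxProd_dist hG hH _ _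
    have e2 : (G □ H).dist (φ u) (φ u') = (G □ H).dist u u' := iso_dist hX φ u u'
    rw [hu', hu2'] at e2
    have e3 : (G □ H).dist u u' = G.dist u.1 u'.1 + H.dist u.2 u'.2 := boxProd_dist hG hH _ _
    have e4 : H.dist u.2 u'.2 = 0 := by rw [hu, hu2]; simp
    have e5 : w'.length = w.length := by
      rw [hw', SimpleGraph.Walk.length_copy, SimpleGraph.Walk.length_map]
    omega
  have hmem : φ.symm.toHom (a, d) ∈ w'.support := by
    rw [hw', SimpleGraph.Walk.support_copy, SimpleGraph.Walk.support_map]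
    refine List.mem_map_of_mem ?_
    rw [hw, SimpleGraph.Walk.mem_support_append_iff]
    exact Or.inl (SimpleGraph.Walk.end_mem_support _)
  have := snd_const_of_geodesic hG hH w' hu hu2 hle _ hmem
  exact ⟨φ.symm (a, d), this, by simp⟩

lemma rect_col (hG : G.Connected) (hH : H.Connected) (φ : (G □ H) ≃g (G □ H)) (g₀ : α)
    {a c : α} {b d : β} (h1 : (a, b) ∈ colImg G H φ g₀) (h2 : (c, d) ∈ colImg G H φ g₀) :
    (a, d) ∈ colImg G H φ g₀ := by
  set φ' : (H □ G) ≃g (H □ G) := ((boxProdComm H G).trans φ).trans (boxProdComm G H) with hφ'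
  have happ : ∀ x : β × α, φ' x = (φ x.swap).swap := fun x => rfl
  have h1' : (d, c) ∈ rowImg H G φ' g₀ := by
    obtain ⟨u, hu, hu'⟩ := h2
    exact ⟨u.swap, hu, by rw [happ]; simp [hu']⟩
  have h2' : (b, a) ∈ rowImg H G φ' g₀ := by
    obtain ⟨u, hu, hu'⟩ := h1
    exact ⟨u.swap, hu, by rw [happ]; simp [hu']⟩
  obtain ⟨u, hu, hu'⟩ := rect_row hH hG φ' g₀ h1' h2'
  refine ⟨u.swap, hu, ?_⟩
  rw [happ] at hu'
  have := congrArg Prod.swap hu'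
  simpa using this
/-- Congruence of box products. -/
def boxProdCongr {α₁ β₁ α₂ β₂ : Type} {A : SimpleGraph α₁} {A' : SimpleGraph α₂}
    {B : SimpleGraph β₁} {B' : SimpleGraph β₂} (e₁ : A ≃g A') (e₂ : B ≃g B') :
    (A □ B) ≃g (A' □ B') where
  toEquiv := Equiv.prodCongr e₁.toEquiv e₂.toEquiv
  map_rel_iff' := by
    intro x y
    show A'.Adj (e₁ x.1) (e₁ y.1) ∧ e₂ x.2 = e₂ y.2 ∨
        B'.Adj (e₂ x.2) (e₂ y.2) ∧ e₁ x.1 = e₁ y.1 ↔ _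
    rw [e₁.map_rel_iff, e₂.map_rel_iff, EmbeddingLike.apply_eq_iff_eq,
      EmbeddingLike.apply_eq_iff_eq]
    exact Iff.rfl

/-- A row decomposes `G` as a box product of induced subgraphs. -/
noncomputable def iso_row (hG : G.Connected) (hH : H.Connected) (φ : (G □ H) ≃g (G □ H)) (h₀ : β) :
    G ≃g (G.induce (Prod.fst '' rowImg G H φ h₀)) □ (H.induce (Prod.snd '' rowImg G H φ h₀)) where
  toFun g := (⟨(φ (g, h₀)).1, ⟨φ (g, h₀), ⟨(g, h₀), rfl, rfl⟩, rfl⟩⟩,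
              ⟨(φ (g, h₀)).2, ⟨φ (g, h₀), ⟨(g, h₀), rfl, rfl⟩, rfl⟩⟩)
  invFun p := (φ.symm ((p.1 : α), (p.2 : β))).1
  left_inv g := by simp
  right_inv := by
    rintro ⟨⟨a, ha⟩, ⟨b, hb⟩⟩
    obtain ⟨x, hx, hxa⟩ := ha
    obtain ⟨y, hy, hyb⟩ := hb
    have hx' : (a, x.2) ∈ rowImg G H φ h₀ := by rwa [← hxa, Prod.mk.eta]
    have hy' : (y.1, b) ∈ rowImg G H φ h₀ := by rwa [← hyb, Prod.mk.eta]
    have key : (a, b) ∈ rowImg G H φ h₀ := rect_row hG hH φ h₀ hx' hy'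
    obtain ⟨u, hu, hu'⟩ := key
    have huh : u.2 = h₀ := hu
    have hsymm : φ.symm (a, b) = u := by rw [← hu']; simp
    have hu2 : ((φ.symm (a, b)).1, h₀) = u := by rw [hsymm, ← huh]
    refine Prod.ext (Subtype.ext ?_) (Subtype.ext ?_) <;> (dsimp only; rw [hu2, hu'])
  map_rel_iff' := by
    intro g g'
    have h1 : (G □ H).Adj (φ (g, h₀)) (φ (g', h₀)) ↔ G.Adj g g' := by
      rw [φ.map_rel_iff]; exact SimpleGraph.boxProd_adj_left
    rw [← h1]
    simp [SimpleGraph.boxProd_adj, Subtype.ext_iff]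

/-- A column decomposes `H` as a box product of induced subgraphs. -/
noncomputable def iso_col (hG : G.Connected) (hH : H.Connected) (φ : (G □ H) ≃g (G □ H)) (g₀ : α) :
    H ≃g (G.induce (Prod.fst '' colImg G H φ g₀)) □ (H.induce (Prod.snd '' colImg G H φ g₀)) where
  toFun k := (⟨(φ (g₀, k)).1, ⟨φ (g₀, k), ⟨(g₀, k), rfl, rfl⟩, rfl⟩⟩,
              ⟨(φ (g₀, k)).2, ⟨φ (g₀, k), ⟨(g₀, k), rfl, rfl⟩, rfl⟩⟩)
  invFun p := (φ.symm ((p.1 : α), (p.2 : β))).2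
  left_inv k := by simp
  right_inv := by
    rintro ⟨⟨a, ha⟩, ⟨b, hb⟩⟩
    obtain ⟨x, hx, hxa⟩ := ha
    obtain ⟨y, hy, hyb⟩ := hb
    have hx' : (a, x.2) ∈ colImg G H φ g₀ := by rwa [← hxa, Prod.mk.eta]
    have hy' : (y.1, b) ∈ colImg G H φ g₀ := by rwa [← hyb, Prod.mk.eta]
    have key : (a, b) ∈ colImg G H φ g₀ := rect_col hG hH φ g₀ hx' hy'
    obtain ⟨u, hu, hu'⟩ := key
    have huh : u.1 = g₀ := hu
    have hsymm : φ.symm (a, b) = u := by rw [← hu']; simp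
    have hu2 : (g₀, (φ.symm (a, b)).2) = u := by rw [hsymm, ← huh]
    refine Prod.ext (Subtype.ext ?_) (Subtype.ext ?_) <;> (dsimp only; rw [hu2, hu'])
  map_rel_iff' := by
    intro k k'
    have h1 : (G □ H).Adj (φ (g₀, k)) (φ (g₀, k')) ↔ H.Adj k k' := by
      rw [φ.map_rel_iff]; exact SimpleGraph.boxProd_adj_right
    rw [← h1]
    simp [SimpleGraph.boxProd_adj, Subtype.ext_iff]
lemma fst_eq_of_mem_row_col (hG : G.Connected) (hH : H.Connected) (φ : (G □ H) ≃g (G □ H))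
    (g₂ : α) (h₀ : β) {x : α}
    (hx1 : x ∈ Prod.fst '' rowImg G H φ h₀) (hx2 : x ∈ Prod.fst '' colImg G H φ g₂) :
    x = (φ (g₂, h₀)).1 := by
  obtain ⟨p, hp, hpx⟩ := hx1
  obtain ⟨q, hq, hqx⟩ := hx2
  have hp' : (x, p.2) ∈ rowImg G H φ h₀ := by rwa [← hpx, Prod.mk.eta]
  have hq' : (x, q.2) ∈ colImg G H φ g₂ := by rwa [← hqx, Prod.mk.eta]
  have hb1 : ((φ (g₂, h₀)).1, (φ (g₂, h₀)).2) ∈ rowImg G H φ h₀ := by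
    rw [Prod.mk.eta]; exact ⟨(g₂, h₀), rfl, rfl⟩
  have hb2 : ((φ (g₂, h₀)).1, (φ (g₂, h₀)).2) ∈ colImg G H φ g₂ := by
    rw [Prod.mk.eta]; exact ⟨(g₂, h₀), rfl, rfl⟩
  have m1 : (x, (φ (g₂, h₀)).2) ∈ rowImg G H φ h₀ := rect_row hG hH φ h₀ hp' hb1
  have m2 : (x, (φ (g₂, h₀)).2) ∈ colImg G H φ g₂ := rect_col hG hH φ g₂ hq' hb2
  obtain ⟨u, hu, hu'⟩ := m1
  obtain ⟨v, hv, hv'⟩ := m2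
  have huv : u = v := by
    have := hu'.trans hv'.symm
    exact φ.toEquiv.injective this
  have hu2 : u.2 = h₀ := hu
  have hv1 : v.1 = g₂ := hv
  have hgh : u = (g₂, h₀) := Prod.ext (by rw [huv]; exact hv1) hu2
  rw [← hgh, hu']

/-- The common-factor transfer isomorphism. -/
noncomputable def transfer (hG : G.Connected) (hH : H.Connected) (φ : (G □ H) ≃g (G □ H))
    (g₀ : α) (h₀ : β) :
    (H.induce (Prod.snd '' rowImg G H φ h₀)) ≃g
      (G.induce (Prod.fst '' colImg G H φ.symm ((φ (g₀, h₀)).1))) := by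
  set b := (φ (g₀, h₀)).1 with hbdef
  have hbrow : ∀ t ∈ Prod.snd '' rowImg G H φ h₀, (b, t) ∈ rowImg G H φ h₀ := by
    intro t ht
    obtain ⟨p, hp, hpt⟩ := ht
    have hp' : (p.1, t) ∈ rowImg G H φ h₀ := by rwa [← hpt, Prod.mk.eta]
    have hb1 : (b, (φ (g₀, h₀)).2) ∈ rowImg G H φ h₀ := by
      rw [hbdef, Prod.mk.eta]; exact ⟨(g₀, h₀), rfl, rfl⟩
    exact rect_row hG hH φ h₀ hb1 hp'
  have hsnd : ∀ t ∈ Prod.snd '' rowImg G H φ h₀, (φ.symm (b, t)).2 = h₀ := by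
    intro t ht
    obtain ⟨u, hu, hu'⟩ := hbrow t ht
    have : φ.symm (b, t) = u := by rw [← hu']; simp
    rw [this]; exact hu
  have hkey : ∀ x : α, x ∈ Prod.fst '' colImg G H φ.symm b → b = (φ (x, h₀)).1 := by
    intro x hx
    obtain ⟨v, ⟨w, hw, hw'⟩, hvx⟩ := hx
    have hwmem : b ∈ Prod.fst '' colImg G H φ x := by
      refine ⟨w, ⟨v, ?_, ?_⟩, hw⟩
      · exact hvx
      · rw [← hw']; simp
    have hbrow' : b ∈ Prod.fst '' rowImg G H φ h₀ := ⟨φ (g₀, h₀), ⟨(g₀, h₀), rfl, rfl⟩, rfl⟩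
    exact fst_eq_of_mem_row_col hG hH φ x h₀ hbrow' hwmem
  exact
  { toFun := fun t => ⟨(φ.symm (b, (t : β))).1,
      ⟨φ.symm (b, (t : β)), ⟨(b, (t : β)), rfl, rfl⟩, rfl⟩⟩
    invFun := fun x => ⟨(φ ((x : α), h₀)).2, ⟨φ ((x : α), h₀), ⟨((x : α), h₀), rfl, rfl⟩, rfl⟩⟩
    left_inv := by
      rintro ⟨t, ht⟩
      refine Subtype.ext ?_
      dsimp only
      have h1 : ((φ.symm (b, t)).1, h₀) = φ.symm (b, t) :=
        Prod.ext rfl (hsnd t ht).symm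
      rw [h1]; simp
    right_inv := by
      rintro ⟨x, hx⟩
      refine Subtype.ext ?_
      dsimp only
      have h1 : (b, (φ (x, h₀)).2) = φ (x, h₀) := Prod.ext (hkey x hx) rfl
      rw [h1]; simp
    map_rel_iff' := by
      rintro ⟨t, ht⟩ ⟨t', ht'⟩
      show G.Adj (φ.symm (b, t)).1 (φ.symm (b, t')).1 ↔ H.Adj t t'
      have h1 : ((φ.symm (b, t)).1, h₀) = φ.symm (b, t) := Prod.ext rfl (hsnd t ht).symm
      have h2 : ((φ.symm (b, t')).1, h₀) = φ.symm (b, t') := Prod.ext rfl (hsnd t' ht').symm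
      rw [← SimpleGraph.boxProd_adj_left (G := G) (H := H) (b := h₀), h1, h2,
        φ.symm.map_rel_iff]
      exact SimpleGraph.boxProd_adj_right }

lemma snd_const [Fintype α] [Fintype β] (hG : G.Connected) (hH : H.Connected)
    (hrp : G.RelPrime H) (φ : (G □ H) ≃g (G □ H)) (h₀ : β) (g g' : α) :
    (φ (g, h₀)).2 = (φ (g', h₀)).2 := by
  classical
  obtain ⟨g₀⟩ := hG.nonempty
  set b := (φ (g₀, h₀)).1 with hbdef
  haveI : Fintype ↥(Prod.fst '' rowImg G H φ h₀) := Fintype.ofFinite _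
  haveI : Fintype ↥(Prod.snd '' rowImg G H φ h₀) := Fintype.ofFinite _
  haveI : Fintype ↥(Prod.fst '' colImg G H φ.symm b) := Fintype.ofFinite _
  haveI : Fintype ↥(Prod.snd '' colImg G H φ.symm b) := Fintype.ofFinite _
  have isoG := iso_row hG hH φ h₀
  have isoH := iso_col hG hH φ.symm b
  have etr := transfer hG hH φ g₀ h₀
  have isoH2 : H ≃g (H.induce (Prod.snd '' colImg G H φ.symm b)) □
      (H.induce (Prod.snd '' rowImg G H φ h₀)) :=
    (isoH.trans (boxProdCongr etr.symm (RelIso.refl _))).trans (boxProdComm _ _)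
  have hcard := hrp _ _ _ (G.induce (Prod.fst '' rowImg G H φ h₀))
    (H.induce (Prod.snd '' colImg G H φ.symm b))
    (H.induce (Prod.snd '' rowImg G H φ h₀)) ⟨isoG⟩ ⟨isoH2⟩
  have hsub := Fintype.card_le_one_iff.mp (le_of_eq hcard)
  have m1 : (φ (g, h₀)).2 ∈ Prod.snd '' rowImg G H φ h₀ :=
    ⟨φ (g, h₀), ⟨(g, h₀), rfl, rfl⟩, rfl⟩
  have m2 : (φ (g', h₀)).2 ∈ Prod.snd '' rowImg G H φ h₀ :=
    ⟨φ (g', h₀), ⟨(g', h₀), rfl, rfl⟩, rfl⟩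
  exact congrArg Subtype.val (hsub ⟨_, m1⟩ ⟨_, m2⟩)

lemma fst_const [Fintype α] [Fintype β] (hG : G.Connected) (hH : H.Connected)
    (hrp : G.RelPrime H) (φ : (G □ H) ≃g (G □ H)) (g₀ : α) (k k' : β) :
    (φ (g₀, k)).1 = (φ (g₀, k')).1 := by
  have hrp' : H.RelPrime G := by
    intro A B C iA iB iC G₁ H₁ J h1 h2
    exact hrp B A C H₁ G₁ J h2 h1
  set φ' : (H □ G) ≃g (H □ G) := ((boxProdComm H G).trans φ).trans (boxProdComm G H) with hφ'
  have happ : ∀ x : β × α, φ' x = (φ x.swap).swap := fun x => rfl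
  have hc := snd_const hH hG hrp' φ' g₀ k k'
  rw [happ (k, g₀), happ (k', g₀)] at hc
  exact hc
lemma exists_prod_form [Fintype α] [Fintype β] (hG : G.Connected) (hH : H.Connected)
    (hrp : G.RelPrime H) (φ : (G □ H) ≃g (G □ H)) :
    ∃ (σ : G ≃g G) (τ : H ≃g H), ∀ p : α × β, φ p = (σ p.1, τ p.2) := by
  obtain ⟨ga⟩ := hG.nonempty
  obtain ⟨hb⟩ := hH.nonempty
  have key : ∀ p : α × β, φ p = ((φ (p.1, hb)).1, (φ (ga, p.2)).2) := by
    intro p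
    have e1 : (φ (p.1, p.2)).1 = (φ (p.1, hb)).1 := fst_const hG hH hrp φ p.1 p.2 hb
    have e2 : (φ (p.1, p.2)).2 = (φ (ga, p.2)).2 := snd_const hG hH hrp φ p.2 p.1 ga
    rw [Prod.mk.eta] at e1 e2
    exact Prod.ext e1 e2
  have hσinj : Function.Injective (fun g : α => (φ (g, hb)).1) := by
    intro g g' he
    have h1 := key (g, hb)
    have h2 := key (g', hb)
    dsimp only at h1 h2 he
    have : φ (g, hb) = φ (g', hb) := by rw [h1, h2, he]
    exact congrArg Prod.fst (φ.toEquiv.injective this)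
  have hτinj : Function.Injective (fun k : β => (φ (ga, k)).2) := by
    intro k k' he
    have h1 := key (ga, k)
    have h2 := key (ga, k')
    dsimp only at h1 h2 he
    have : φ (ga, k) = φ (ga, k') := by rw [h1, h2, he]
    exact congrArg Prod.snd (φ.toEquiv.injective this)
  have hσadj : ∀ g g', G.Adj (φ (g, hb)).1 (φ (g', hb)).1 ↔ G.Adj g g' := by
    intro g g'
    have h1 : (G □ H).Adj ((φ (g, hb)).1, (φ (ga, hb)).2) ((φ (g', hb)).1, (φ (ga, hb)).2) ↔
        G.Adj (φ (g, hb)).1 (φ (g', hb)).1 := SimpleGraph.boxProd_adj_left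
    rw [← h1, ← key (g, hb), ← key (g', hb), φ.map_rel_iff]
    exact SimpleGraph.boxProd_adj_left
  have hτadj : ∀ k k', H.Adj (φ (ga, k)).2 (φ (ga, k')).2 ↔ H.Adj k k' := by
    intro k k'
    have h1 : (G □ H).Adj ((φ (ga, hb)).1, (φ (ga, k)).2) ((φ (ga, hb)).1, (φ (ga, k')).2) ↔
        H.Adj (φ (ga, k)).2 (φ (ga, k')).2 := SimpleGraph.boxProd_adj_right
    rw [← h1, ← key (ga, k), ← key (ga, k'), φ.map_rel_iff]
    exact SimpleGraph.boxProd_adj_right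
  refine ⟨⟨Equiv.ofBijective _ (Finite.injective_iff_bijective.mp hσinj), ?_⟩,
    ⟨Equiv.ofBijective _ (Finite.injective_iff_bijective.mp hτinj), ?_⟩, key⟩
  · intro g g'
    exact hσadj g g'
  · intro k k'
    exact hτadj k k'

lemma card_aut [Fintype α] [Fintype β] (hG : G.Connected) (hH : H.Connected)
    (hrp : G.RelPrime H) :
    Nat.card ((G □ H) ≃g (G □ H)) = Nat.card (G ≃g G) * Nat.card (H ≃g H) := by
  obtain ⟨ga⟩ := hG.nonempty
  obtain ⟨hb⟩ := hH.nonempty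
  rw [← Nat.card_prod]
  refine (Nat.card_eq_of_bijective
    (fun st : (G ≃g G) × (H ≃g H) => boxProdCongr st.1 st.2) ⟨?_, ?_⟩).symm
  · rintro ⟨σ, τ⟩ ⟨σ', τ'⟩ hst
    have happ : ∀ p : α × β, (σ p.1, τ p.2) = (σ' p.1, τ' p.2) := by
      intro p
      exact congrArg (fun e : (G □ H) ≃g (G □ H) => e p) hst
    refine Prod.ext (RelIso.ext fun g => ?_) (RelIso.ext fun k => ?_)
    · exact congrArg Prod.fst (happ (g, hb))
    · exact congrArg Prod.snd (happ (ga, k))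
  · intro φ
    obtain ⟨σ, τ, hp⟩ := exists_prod_form hG hH hrp φ
    exact ⟨(σ, τ), RelIso.ext fun p => (hp p).symm⟩
section Count

variable {N : ℕ}

lemma card_copies_mul_card_aut (X : SimpleGraph (Fin N)) :
    Nat.card {H : SimpleGraph (Fin N) // Nonempty (H ≃g X)} * Nat.card (X ≃g X) =
      Nat.factorial N := by
  classical
  letI act : MulAction (Equiv.Perm (Fin N)) (SimpleGraph (Fin N)) :=
  { smul := fun σ H => H.comap ⇑σ.symm
    one_smul := fun H => by ext u v; exact Iff.rfl
    mul_smul := fun σ σ' H => by ext u v; exact Iff.rfl }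
  have smul_def : ∀ (σ : Equiv.Perm (Fin N)) (H : SimpleGraph (Fin N)),
      σ • H = H.comap ⇑σ.symm := fun _ _ => rfl
  have orbit_eq : ∀ Y : SimpleGraph (Fin N),
      Y ∈ MulAction.orbit (Equiv.Perm (Fin N)) X ↔ Nonempty (Y ≃g X) := by
    intro Y
    constructor
    · rintro ⟨σ, rfl⟩
      exact ⟨⟨σ.symm, Iff.rfl⟩⟩
    · rintro ⟨f⟩
      refine ⟨f.toEquiv.symm, ?_⟩
      ext u v
      exact f.map_rel_iff
  have hadj : ∀ σ : Equiv.Perm (Fin N), σ ∈ MulAction.stabilizer (Equiv.Perm (Fin N)) X →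
      ∀ a b, X.Adj (σ a) (σ b) ↔ X.Adj a b := by
    intro σ hσ a b
    have hσ' : σ • X = X := hσ
    have h2 : ∀ u v, X.Adj (σ.symm u) (σ.symm v) ↔ X.Adj u v := by
      intro u v
      conv_rhs => rw [← hσ']
      exact Iff.rfl
    simpa using (h2 (σ a) (σ b)).symm
  have e3 : ↥(MulAction.stabilizer (Equiv.Perm (Fin N)) X) ≃ (X ≃g X) :=
  { toFun := fun s => ⟨s.1, fun {a b} => hadj s.1 s.2 a b⟩
    invFun := fun f => ⟨f.toEquiv, by
      rw [MulAction.mem_stabilizer_iff]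
      ext u v
      show X.Adj (f.toEquiv.symm u) (f.toEquiv.symm v) ↔ X.Adj u v
      have h := f.map_rel_iff (a := f.toEquiv.symm u) (b := f.toEquiv.symm v)
      have e1 : f (f.toEquiv.symm u) = u := f.toEquiv.apply_symm_apply u
      have e2 : f (f.toEquiv.symm v) = v := f.toEquiv.apply_symm_apply v
      rw [e1, e2] at h
      exact h.symm⟩
    left_inv := fun s => Subtype.ext rfl
    right_inv := fun f => RelIso.ext fun x => rfl }
  have e1 : {H : SimpleGraph (Fin N) // Nonempty (H ≃g X)} ≃
      MulAction.orbit (Equiv.Perm (Fin N)) X :=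
    Equiv.subtypeEquivRight fun Y => (orbit_eq Y).symm
  have e2 := MulAction.orbitEquivQuotientStabilizer (Equiv.Perm (Fin N)) X
  have hcard1 : Nat.card {H : SimpleGraph (Fin N) // Nonempty (H ≃g X)} =
      Nat.card (Equiv.Perm (Fin N) ⧸ MulAction.stabilizer (Equiv.Perm (Fin N)) X) :=
    Nat.card_congr (e1.trans e2)
  have hcard2 := Subgroup.card_eq_card_quotient_mul_card_subgroup
    (MulAction.stabilizer (Equiv.Perm (Fin N)) X)
  have hstab : Nat.card ↥(MulAction.stabilizer (Equiv.Perm (Fin N)) X) =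
      Nat.card (X ≃g X) := Nat.card_congr e3
  have hperm : Nat.card (Equiv.Perm (Fin N)) = Nat.factorial N := by
    rw [Nat.card_eq_fintype_card, Fintype.card_perm, Fintype.card_fin]
  rw [hcard1, ← hstab, ← hcard2, hperm]

end Count

end BoxAux

/-- Let `G₁` and `G₂` be connected finite simple graphs on `m` and `n` vertices,
relatively prime with respect to the box product.  The number of simple graphs
on the fixed vertex set `{1, …, mn}` isomorphic to `G₁ □ G₂` equals
`(mn)! / (|Aut(G₁)| ⬝ |Aut(G₂)|)`. -/
theorem card_labeled_copies_boxProd {V₁ V₂ : Type} [Fintype V₁] [Fintype V₂]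
    (G₁ : SimpleGraph V₁) (G₂ : SimpleGraph V₂) (m n : ℕ)
    (hm : Fintype.card V₁ = m) (hn : Fintype.card V₂ = n)
    (h₁ : G₁.Connected) (h₂ : G₂.Connected) (h : G₁.RelPrime G₂) :
    Nat.card {H : SimpleGraph (Fin (m * n)) // Nonempty (H ≃g G₁.boxProd G₂)} =
      (m * n).factorial / (Nat.card (G₁ ≃g G₁) * Nat.card (G₂ ≃g G₂)) := by
  classical
  subst hm
  subst hn
  set X : SimpleGraph (V₁ × V₂) := G₁.boxProd G₂ with hX
  have hcardprod : Fintype.card (V₁ × V₂) = Fintype.card V₁ * Fintype.card V₂ :=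
    Fintype.card_prod V₁ V₂
  set e := Fintype.equivFinOfCardEq hcardprod with he
  set X₀ : SimpleGraph (Fin (Fintype.card V₁ * Fintype.card V₂)) := X.comap ⇑e.symm with hX₀
  have iso0 : X₀ ≃g X := ⟨e.symm, Iff.rfl⟩
  have hsub : {H : SimpleGraph (Fin (Fintype.card V₁ * Fintype.card V₂)) //
      Nonempty (H ≃g G₁.boxProd G₂)} ≃
      {H : SimpleGraph (Fin (Fintype.card V₁ * Fintype.card V₂)) // Nonempty (H ≃g X₀)} :=
    Equiv.subtypeEquivRight fun Y =>
      ⟨fun ⟨f⟩ => ⟨f.trans iso0.symm⟩, fun ⟨f⟩ => ⟨f.trans iso0⟩⟩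
  have hmain := BoxAux.card_copies_mul_card_aut X₀
  have haut0 : Nat.card (X₀ ≃g X₀) = Nat.card (X ≃g X) :=
    Nat.card_congr
    { toFun := fun ψ => (iso0.symm.trans ψ).trans iso0
      invFun := fun ψ => (iso0.trans ψ).trans iso0.symm
      left_inv := fun ψ => RelIso.ext fun x => by simp
      right_inv := fun ψ => RelIso.ext fun x => by simp }
  have haut : Nat.card (X ≃g X) = Nat.card (G₁ ≃g G₁) * Nat.card (G₂ ≃g G₂) :=
    BoxAux.card_aut h₁ h₂ h
  haveI : Finite (X₀ ≃g X₀) := by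
    refine Finite.of_injective (fun ψ : X₀ ≃g X₀ => ψ.toEquiv) ?_
    intro ψ ψ' hh
    exact RelIso.ext fun x => congrArg (fun E => E x) hh
  have hpos : 0 < Nat.card (G₁ ≃g G₁) * Nat.card (G₂ ≃g G₂) := by
    rw [← haut, ← haut0]
    haveI : Nonempty (X₀ ≃g X₀) := ⟨RelIso.refl _⟩
    exact Nat.card_pos
  rw [Nat.card_congr hsub]
  refine (Nat.div_eq_of_eq_mul_left hpos ?_).symm
  rw [← hmain, haut0, haut]
end

section
/- For every n ≥ 1, the number of isomorphism classes of connected simple graphs on n vertices equals the number of finite multisets of isomorphism classes of prime graphs for which the product of the numbers of vertices of the members equals n. Equivalently, the map sending a finite multiset {P₁,…,P_k} of isomorphism classes of prime graphs to the isomorphism class of the box product P₁ □ ⋯ □ P_k (the empty multiset maps to the one-vertex graph) is a bijection onto the set of isomorphism classes of nonempty connected finite simple graphs. -/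
open SimpleGraph

/-- The type of isomorphism classes of connected simple graphs on `n` vertices. -/
def ConnectedClasses (n : ℕ) : Type :=
  Quot fun G H : {G : SimpleGraph (Fin n) // G.Connected} => Nonempty (G.1 ≃g H.1)

/-- The type of isomorphism classes of prime graphs on `m` vertices. -/
def PrimeClasses (m : ℕ) : Type :=
  Quot fun G H : {G : SimpleGraph (Fin m) // G.IsPrime} => Nonempty (G.1 ≃g H.1)

open Relation

section Helpers

theorem rtg_invariant {α : Type*} {β : Sort*} {r : α → α → Prop} {f : α → β}
    (hf : ∀ x y, r x y → f x = f y) {u v : α} (h : ReflTransGen r u v) : f u = f v := by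
  induction h with
  | refl => rfl
  | tail _ h ih => exact ih.trans (hf _ _ h)

theorem rtg_congr {α : Type*} {r r' : α → α → Prop} (h : ∀ x y, r x y ↔ r' x y) {u v : α} :
    ReflTransGen r u v ↔ ReflTransGen r' u v :=
  ⟨fun H => ReflTransGen.mono (fun _ _ hxy => (h _ _).1 hxy) _ _ H,
   fun H => ReflTransGen.mono (fun _ _ hxy => (h _ _).2 hxy) _ _ H⟩

/-- Congruence of box products under isomorphisms. -/
def boxProdCongr {α β γ δ : Type*} {G₁ : SimpleGraph α} {H₁ : SimpleGraph β}
    {G₂ : SimpleGraph γ} {H₂ : SimpleGraph δ} (e₁ : G₁ ≃g G₂) (e₂ : H₁ ≃g H₂) :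
    G₁.boxProd H₁ ≃g G₂.boxProd H₂ where
  toEquiv := Equiv.prodCongr e₁.toEquiv e₂.toEquiv
  map_rel_iff' := by
    intro x y
    simp only [Equiv.prodCongr_apply, boxProd_adj, Prod.map_fst, Prod.map_snd]
    rw [show ∀ a b, G₂.Adj (e₁.toEquiv a) (e₁.toEquiv b) ↔ G₁.Adj a b from fun a b => e₁.map_rel_iff,
      show ∀ a b, H₂.Adj (e₂.toEquiv a) (e₂.toEquiv b) ↔ H₁.Adj a b from fun a b => e₂.map_rel_iff,
      e₁.toEquiv.injective.eq_iff, e₂.toEquiv.injective.eq_iff]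

/-- Induce of induce. -/
def induceInduce {V : Type*} (G : SimpleGraph V) (s : Set V) (t : Set ↑s) (u : Set V)
    (h : ∀ v, v ∈ u ↔ ∃ hv : v ∈ s, (⟨v, hv⟩ : ↑s) ∈ t) : (G.induce s).induce t ≃g G.induce u where
  toFun x := ⟨x.1.1, (h _).2 ⟨x.1.2, x.2⟩⟩
  invFun y := ⟨⟨y.1, ((h _).1 y.2).choose⟩, ((h _).1 y.2).choose_spec⟩
  left_inv x := by ext; rfl
  right_inv y := by ext; rfl
  map_rel_iff' := Iff.rfl

/-- The induced graph on a reflexive-transitive closure class is connected. -/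
theorem induce_rtg_connected {V : Type*} {G : SimpleGraph V} {r : V → V → Prop}
    (hr : ∀ u v, r u v → G.Adj u v) (o : V) :
    (G.induce {v | ReflTransGen r o v}).Connected := by
  rw [connected_iff]
  constructor
  · intro x y
    have key : ∀ v (hv : ReflTransGen r o v),
        (G.induce {v | ReflTransGen r o v}).Reachable ⟨o, ReflTransGen.refl⟩ ⟨v, hv⟩ := by
      intro v hv
      induction hv with
      | refl => exact Reachable.refl _
      | @tail b c hab hbc ih =>
        exact ih.trans (Adj.reachable (by exact hr _ _ hbc : G.Adj b c))
    exact ((key x.1 x.2).symm.trans (key y.1 y.2))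
  · exact ⟨⟨o, ReflTransGen.refl⟩⟩

end Helpers

section BML

variable {V : Type} {G : SimpleGraph V} {R B : V → V → Prop}

/-- Transport an `R`-edge along a `B`-path. -/
theorem bml_transport (hSP : ∀ v u w, R v u → B v w → ∃ z, B u z ∧ R w z)
    {x x' y : V} (hb : ReflTransGen B x x') (hr : R x y) :
    ∃ y', ReflTransGen B y y' ∧ R x' y' := by
  induction hb with
  | refl => exact ⟨y, ReflTransGen.refl, hr⟩
  | @tail m x' _ h ih =>
    obtain ⟨y'', hby, hry⟩ := ih
    obtain ⟨z, hbz, hrz⟩ := hSP m y'' x' hry h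
    exact ⟨z, hby.tail hbz, hrz⟩

theorem bml_comm (hSP : ∀ v u w, R v u → B v w → ∃ z, B u z ∧ R w z)
    {x x' y : V} (hb : ReflTransGen B x x') (hr : ReflTransGen R x y) :
    ∃ y', ReflTransGen B y y' ∧ ReflTransGen R x' y' := by
  induction hr with
  | refl => exact ⟨x', hb, ReflTransGen.refl⟩
  | @tail m y _ h ih =>
    obtain ⟨m', hb', hr'⟩ := ih
    obtain ⟨y', hby, hry⟩ := bml_transport hSP hb' h
    exact ⟨y', hby, hr'.tail hry⟩

theorem bml_main (hconn : G.Connected)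
    (hRs : Symmetric R) (hBs : Symmetric B)
    (hRA : ∀ u v, R u v → G.Adj u v) (hBA : ∀ u v, B u v → G.Adj u v)
    (hsplit : ∀ u v, G.Adj u v → R u v ∨ B u v)
    (hSP : ∀ v u w, R v u → B v w → ∃ z, B u z ∧ R w z)
    (hL3 : ∀ u v, ReflTransGen R u v → ReflTransGen B u v → u = v)
    (o : V) :
    Nonempty (G ≃g (G.induce {v | ReflTransGen R o v}) □
                   (G.induce {v | ReflTransGen B o v})) := by
  classical
  have hSP' : ∀ v u w, B v u → R v w → ∃ z, R u z ∧ B w z := by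
    intro v u w hb hr
    obtain ⟨z, h1, h2⟩ := hSP v w u hr hb
    exact ⟨z, h2, h1⟩
  have hRsym : Symmetric (ReflTransGen R) := fun _ _ h => (@ReflTransGen.stdSymm _ R ⟨fun _ _ h => hRs h⟩).symm _ _ h
  have hBsym : Symmetric (ReflTransGen B) := fun _ _ h => (@ReflTransGen.stdSymm _ B ⟨fun _ _ h => hBs h⟩).symm _ _ h
  -- normal forms
  have normal1 : ∀ v, ∃ m, ReflTransGen R o m ∧ ReflTransGen B m v := by
    intro v
    have h : ReflTransGen G.Adj o v := (reachable_iff_reflTransGen _ _).1 (hconn o v)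
    induction h with
    | refl => exact ⟨o, ReflTransGen.refl, ReflTransGen.refl⟩
    | @tail y z _ h ih =>
      obtain ⟨m, hrm, hbm⟩ := ih
      rcases hsplit _ _ h with hR | hB
      · obtain ⟨y', hbz, hrm'⟩ := bml_transport hSP (hBsym hbm) hR
        exact ⟨y', hrm.tail hrm', hBsym hbz⟩
      · exact ⟨m, hrm, hbm.tail hB⟩
  have normal2 : ∀ v, ∃ m, ReflTransGen B o m ∧ ReflTransGen R m v := by
    intro v
    have h : ReflTransGen G.Adj o v := (reachable_iff_reflTransGen _ _).1 (hconn o v)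
    induction h with
    | refl => exact ⟨o, ReflTransGen.refl, ReflTransGen.refl⟩
    | @tail y z _ h ih =>
      obtain ⟨m, hbm, hrm⟩ := ih
      rcases hsplit _ _ h with hR | hB
      · exact ⟨m, hbm, hrm.tail hR⟩
      · obtain ⟨y', hrz, hbm'⟩ := bml_transport (R := B) (B := R) hSP' (hRsym hrm) hB
        exact ⟨y', hbm.tail hbm', hRsym hrz⟩
  -- projections
  set p1 : V → V := fun v => (normal1 v).choose with hp1def
  set p2 : V → V := fun v => (normal2 v).choose with hp2def
  have spec1 : ∀ v, ReflTransGen R o (p1 v) ∧ ReflTransGen B (p1 v) v := fun v => (normal1 v).choose_spec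
  have spec2 : ∀ v, ReflTransGen B o (p2 v) ∧ ReflTransGen R (p2 v) v := fun v => (normal2 v).choose_spec
  have eq1 : ∀ {v m}, ReflTransGen R o m → ReflTransGen B m v → p1 v = m := by
    intro v m hrm hbm
    obtain ⟨hr', hb'⟩ := spec1 v
    exact hL3 _ _ ((hRsym hr').trans hrm) (hb'.trans (hBsym hbm))
  have eq2 : ∀ {v m}, ReflTransGen B o m → ReflTransGen R m v → p2 v = m := by
    intro v m hbm hrm
    obtain ⟨hb', hr'⟩ := spec2 v
    exact hL3 _ _ (hr'.trans (hRsym hrm)) ((hBsym hb').trans hbm)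
  have stepB1 : ∀ {u v}, B u v → p1 u = p1 v := by
    intro u v hB
    obtain ⟨hr, hb⟩ := spec1 u
    exact (eq1 hr (hb.tail hB)).symm
  have stepR2 : ∀ {u v}, R u v → p2 u = p2 v := by
    intro u v hR
    obtain ⟨hb, hr⟩ := spec2 u
    exact (eq2 hb (hr.tail hR)).symm
  have stepR1 : ∀ {u v}, R u v → R (p1 u) (p1 v) := by
    intro u v hR
    obtain ⟨hr, hb⟩ := spec1 u
    obtain ⟨y', hby, hry⟩ := bml_transport hSP (hBsym hb) hR
    have : p1 v = y' := eq1 (hr.tail hry) (hBsym hby)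
    rw [this]; exact hry
  have stepB2 : ∀ {u v}, B u v → B (p2 u) (p2 v) := by
    intro u v hB
    obtain ⟨hb, hr⟩ := spec2 u
    obtain ⟨y', hry, hby⟩ := bml_transport (R := B) (B := R) hSP' (hRsym hr) hB
    have : p2 v = y' := eq2 (hb.tail hby) (hRsym hry)
    rw [this]; exact hby
  have inj : ∀ {u v}, p1 u = p1 v → p2 u = p2 v → u = v := by
    intro u v h1 h2
    obtain ⟨_, hb⟩ := spec1 u
    obtain ⟨_, hb'⟩ := spec1 v
    obtain ⟨_, hr⟩ := spec2 u
    obtain ⟨_, hr'⟩ := spec2 v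
    exact hL3 u v ((hRsym hr).trans (h2 ▸ hr')) ((hBsym hb).trans (h1 ▸ hb'))
  -- the map
  set C1 : Set V := {v | ReflTransGen R o v} with hC1
  set C2 : Set V := {v | ReflTransGen B o v} with hC2
  have mem1 : ∀ v, p1 v ∈ C1 := fun v => (spec1 v).1
  have mem2 : ∀ v, p2 v ∈ C2 := fun v => (spec2 v).1
  set Φ : V → ↑C1 × ↑C2 := fun v => (⟨p1 v, mem1 v⟩, ⟨p2 v, mem2 v⟩) with hΦ
  have hbij : Function.Bijective Φ := by
    constructor
    · intro u v h
      rw [Prod.ext_iff, Subtype.ext_iff, Subtype.ext_iff] at h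
      exact inj h.1 h.2
    · rintro ⟨⟨m1, hm1⟩, ⟨m2, hm2⟩⟩
      obtain ⟨v, hbv, hrv⟩ := bml_comm hSP hm2 hm1
      refine ⟨v, ?_⟩
      simp only [hΦ, Prod.mk.injEq, Subtype.mk.injEq]
      exact ⟨eq1 hm1 hbv, eq2 hm2 hrv⟩
  -- monochromaticity inside classes
  have mono1 : ∀ u v, u ∈ C1 → v ∈ C1 → G.Adj u v → R u v := by
    intro u v hu hv hadj
    rcases hsplit _ _ hadj with hR | hB
    · exact hR
    · exact absurd (hL3 u v ((hRsym hu).trans hv) (ReflTransGen.single hB) ▸ hadj) (G.irrefl)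
  have mono2 : ∀ u v, u ∈ C2 → v ∈ C2 → G.Adj u v → B u v := by
    intro u v hu hv hadj
    rcases hsplit _ _ hadj with hR | hB
    · exact absurd (hL3 u v (ReflTransGen.single hR) ((hBsym hu).trans hv) ▸ hadj) (G.irrefl)
    · exact hB
  -- lifts
  have liftR : ∀ {u v}, R (p1 u) (p1 v) → p2 u = p2 v → R u v := by
    intro u v hR h2
    obtain ⟨hr, hb⟩ := spec1 u
    obtain ⟨y, hby, hry⟩ := bml_transport hSP hb hR
    have hy1 : p1 y = p1 v := eq1 ((spec1 v).1) hby
    have hy2 : p2 y = p2 v := (stepR2 hry).symm.trans h2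
    have : y = v := inj hy1 hy2
    exact this ▸ hry
  have liftB : ∀ {u v}, B (p2 u) (p2 v) → p1 u = p1 v → B u v := by
    intro u v hB h1
    obtain ⟨hb, hr⟩ := spec2 u
    obtain ⟨y, hry, hby⟩ := bml_transport (R := B) (B := R) hSP' hr hB
    have hy2 : p2 y = p2 v := eq2 ((spec2 v).1) hry
    have hy1 : p1 y = p1 v := (stepB1 hby).symm.trans h1
    have : y = v := inj hy1 hy2
    exact this ▸ hby
  -- adjacency characterization
  have adj_iff : ∀ u v, G.Adj u v ↔
      ((G.Adj (p1 u) (p1 v) ∧ p2 u = p2 v) ∨ (G.Adj (p2 u) (p2 v) ∧ p1 u = p1 v)) := by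
    intro u v
    constructor
    · intro hadj
      rcases hsplit _ _ hadj with hR | hB
      · exact Or.inl ⟨hRA _ _ (stepR1 hR), stepR2 hR⟩
      · exact Or.inr ⟨hBA _ _ (stepB2 hB), stepB1 hB⟩
    · rintro (⟨hadj, h2⟩ | ⟨hadj, h1⟩)
      · exact hRA _ _ (liftR (mono1 _ _ (mem1 u) (mem1 v) hadj) h2)
      · exact hBA _ _ (liftB (mono2 _ _ (mem2 u) (mem2 v) hadj) h1)
  refine ⟨{ toEquiv := Equiv.ofBijective Φ hbij, map_rel_iff' := ?_ }⟩
  intro u v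
  show (SimpleGraph.boxProd _ _).Adj (Φ u) (Φ v) ↔ G.Adj u v
  rw [boxProd_adj]
  show (G.Adj (p1 u) (p1 v) ∧ (⟨p2 u, _⟩ : ↑C2) = ⟨p2 v, _⟩) ∨
      (G.Adj (p2 u) (p2 v) ∧ (⟨p1 u, _⟩ : ↑C1) = ⟨p1 v, _⟩) ↔ G.Adj u v
  rw [Subtype.mk.injEq, Subtype.mk.injEq]
  exact (adj_iff u v).symm

end BML
section Squares

variable {V P Q : Type} {G : SimpleGraph V} {GP : SimpleGraph P} {GQ : SimpleGraph Q}

/-- First coordinate moving edges w.r.t. a product decomposition. -/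
def E1 (ψ : G ≃g GP □ GQ) (u v : V) : Prop := G.Adj u v ∧ (ψ u).2 = (ψ v).2

/-- Second coordinate moving edges. -/
def E2 (ψ : G ≃g GP □ GQ) (u v : V) : Prop := G.Adj u v ∧ (ψ u).1 = (ψ v).1

theorem E1.symm {ψ : G ≃g GP □ GQ} {u v : V} (h : E1 ψ u v) : E1 ψ v u := ⟨h.1.symm, h.2.symm⟩
theorem E2.symm {ψ : G ≃g GP □ GQ} {u v : V} (h : E2 ψ u v) : E2 ψ v u := ⟨h.1.symm, h.2.symm⟩

theorem adj_E1_or_E2 (ψ : G ≃g GP □ GQ) {u v : V} (h : G.Adj u v) : E1 ψ u v ∨ E2 ψ u v := by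
  have := ψ.map_rel_iff.mpr h
  rw [boxProd_adj] at this
  rcases this with ⟨_, h2⟩ | ⟨_, h1⟩
  · exact Or.inl ⟨h, h2⟩
  · exact Or.inr ⟨h, h1⟩

theorem not_E1_and_E2 (ψ : G ≃g GP □ GQ) {u v : V} (h1 : E1 ψ u v) (h2 : E2 ψ u v) : False := by
  have : ψ u = ψ v := Prod.ext h2.2 h1.2
  exact G.irrefl (ψ.toEquiv.injective this ▸ h1.1)

theorem E1_adjP (ψ : G ≃g GP □ GQ) {u v : V} (h : E1 ψ u v) : GP.Adj (ψ u).1 (ψ v).1 := by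
  have := ψ.map_rel_iff.mpr h.1
  rw [boxProd_adj] at this
  rcases this with ⟨ha, _⟩ | ⟨ha, h1⟩
  · exact ha
  · exact absurd (ψ.toEquiv.injective (Prod.ext h1 h.2) ▸ h.1) G.irrefl

theorem E2_adjQ (ψ : G ≃g GP □ GQ) {u v : V} (h : E2 ψ u v) : GQ.Adj (ψ u).2 (ψ v).2 := by
  have := ψ.map_rel_iff.mpr h.1
  rw [boxProd_adj] at this
  rcases this with ⟨ha, h2⟩ | ⟨ha, _⟩
  · exact absurd (ψ.toEquiv.injective (Prod.ext h.2 h2) ▸ h.1) G.irrefl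
  · exact ha

/-- If `z` is adjacent to two distinct vertices lying in a common layer,
then `z` lies in that layer as well. -/
theorem stay (ψ : G ≃g GP □ GQ) {z u w : V} (hzu : G.Adj z u) (hzw : G.Adj z w)
    (huw : u ≠ w) (h2 : (ψ u).2 = (ψ w).2) : (ψ z).2 = (ψ u).2 := by
  rcases adj_E1_or_E2 ψ hzu with h | h
  · exact h.2
  · rcases adj_E1_or_E2 ψ hzw with h' | h'
    · exact h'.2.trans h2.symm
    · exact absurd (ψ.toEquiv.injective (Prod.ext (h.2.symm.trans h'.2) h2)) huw

/-- The square construction: an `E1`-edge and an `E2`-edge at a common vertex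
span a square with opposite edges of the same type. -/
theorem core_square (χ : G ≃g GP □ GQ) {x u w : V}
    (hxu : E1 χ x u) (hxw : E2 χ x w) :
    ∃ z, E2 χ u z ∧ E1 χ w z := by
  refine ⟨χ.symm ((χ u).1, (χ w).2), ?_⟩
  set z := χ.symm ((χ u).1, (χ w).2) with hzdef
  have hz : χ z = ((χ u).1, (χ w).2) := χ.toEquiv.apply_symm_apply _
  have hQ' : GQ.Adj (χ u).2 (χ w).2 := hxu.2 ▸ E2_adjQ χ hxw
  have hP' : GP.Adj (χ w).1 (χ u).1 := hxw.2 ▸ E1_adjP χ hxu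
  have hadj_u : G.Adj u z := by
    apply χ.map_rel_iff.mp
    rw [hz, boxProd_adj]
    exact Or.inr ⟨hQ', rfl⟩
  have hadj_w : G.Adj w z := by
    apply χ.map_rel_iff.mp
    rw [hz, boxProd_adj]
    exact Or.inl ⟨hP', rfl⟩
  exact ⟨⟨hadj_u, by rw [hz]⟩, ⟨hadj_w, by rw [hz]⟩⟩

end Squares

section MLL

variable {V P Q S T : Type} {G : SimpleGraph V} {GP : SimpleGraph P} {GQ : SimpleGraph Q}
  {GS : SimpleGraph S} {GT : SimpleGraph T}

theorem rtg_subtype_val {α : Type*} {s : Set α} {r : α → α → Prop} {x y : ↑s}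
    (h : ReflTransGen (fun a b : ↑s => r a.1 b.1) x y) : ReflTransGen r x.1 y.1 := by
  induction h with
  | refl => exact ReflTransGen.refl
  | tail _ step ih => exact ih.tail step

/-- The layer through `o` in the `GP` direction, as an induced subgraph,
is isomorphic to `GP`. -/
noncomputable def layerIso (ψ : G ≃g GP □ GQ) (o : V) :
    GP ≃g G.induce {v | (ψ v).2 = (ψ o).2} := by
  refine { toEquiv := ?_, map_rel_iff' := ?_ }
  · refine
      { toFun := fun p => ⟨ψ.symm (p, (ψ o).2), by
          simp only [Set.mem_setOf_eq]
          rw [RelIso.apply_symm_apply]⟩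
        invFun := fun x => (ψ x.1).1
        left_inv := fun p => by simp only; rw [RelIso.apply_symm_apply]
        right_inv := fun x => by
          apply Subtype.ext
          simp only
          have hx : ((ψ x.1).1, (ψ o).2) = ψ x.1 := Prod.ext rfl x.2.symm
          rw [hx, RelIso.symm_apply_apply] }
  · intro p p'
    show G.Adj (ψ.symm (p, (ψ o).2)) (ψ.symm (p', (ψ o).2)) ↔ GP.Adj p p'
    rw [ψ.symm.map_rel_iff]
    exact boxProd_adj_left

theorem MLL (hconn : G.Connected) (ψ : G ≃g GP □ GQ) (χ : G ≃g GS □ GT) (o : V)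
    {r₁ r₂ : V → V → Prop}
    (h₁ : ∀ u v, r₁ u v ↔ E1 ψ u v ∧ E1 χ u v)
    (h₂ : ∀ u v, r₂ u v ↔ E1 ψ u v ∧ E2 χ u v) :
    Nonempty (GP ≃g (G.induce {v | ReflTransGen r₁ o v}) □
                    (G.induce {v | ReflTransGen r₂ o v})) := by
  classical
  set Sp : Set V := {v | (ψ v).2 = (ψ o).2} with hSp
  set Lay : SimpleGraph ↑Sp := G.induce Sp with hLay
  have iso1 : GP ≃g Lay := layerIso ψ o
  have hGP : GP.Connected := (connected_boxProd.1 ((Iso.connected_iff ψ).1 hconn)).1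
  have hLayconn : Lay.Connected := (Iso.connected_iff iso1).1 hGP
  set R' : ↑Sp → ↑Sp → Prop := fun x y => r₁ x.1 y.1 with hR'
  set B' : ↑Sp → ↑Sp → Prop := fun x y => r₂ x.1 y.1 with hB'
  have hr1symm : ∀ {u v}, r₁ u v → r₁ v u := by
    intro u v h
    rw [h₁] at *
    exact ⟨h.1.symm, h.2.symm⟩
  have hr2symm : ∀ {u v}, r₂ u v → r₂ v u := by
    intro u v h
    rw [h₂] at *
    exact ⟨h.1.symm, h.2.symm⟩
  have hsplit : ∀ (u v : ↑Sp), Lay.Adj u v → R' u v ∨ B' u v := by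
    intro u v hadj
    have hadjv : G.Adj u.1 v.1 := hadj
    have hψ : E1 ψ u.1 v.1 := ⟨hadjv, u.2.trans v.2.symm⟩
    rcases adj_E1_or_E2 χ hadjv with h | h
    · exact Or.inl ((h₁ _ _).2 ⟨hψ, h⟩)
    · exact Or.inr ((h₂ _ _).2 ⟨hψ, h⟩)
  have hSPsq : ∀ (x u w : ↑Sp), R' x u → B' x w → ∃ z, B' u z ∧ R' w z := by
    intro x u w hR hB
    obtain ⟨hψxu, hχxu⟩ := (h₁ _ _).1 hR
    obtain ⟨hψxw, hχxw⟩ := (h₂ _ _).1 hB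
    obtain ⟨z, hE2uz, hE1wz⟩ := core_square χ hχxu hχxw
    have huw : u.1 ≠ w.1 := by
      intro h
      apply hψxu.1.ne
      exact χ.toEquiv.injective
        (Prod.ext (hχxw.2.trans (congrArg (fun t => (χ t).1) h.symm)) hχxu.2)
    have hzmem : z ∈ Sp := by
      have := stay ψ hE2uz.1.symm hE1wz.1.symm huw (u.2.trans w.2.symm)
      exact this.trans u.2
    refine ⟨⟨z, hzmem⟩, (h₂ _ _).2 ⟨⟨hE2uz.1, u.2.trans hzmem.symm⟩, hE2uz⟩,
      (h₁ _ _).2 ⟨⟨hE1wz.1, w.2.trans hzmem.symm⟩, hE1wz⟩⟩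
  have hL3 : ∀ (u v : ↑Sp), ReflTransGen R' u v → ReflTransGen B' u v → u = v := by
    intro u v hr hb
    have h2 : (χ u.1).2 = (χ v.1).2 :=
      rtg_invariant (f := fun x : ↑Sp => (χ x.1).2)
        (fun x y hxy => ((h₁ _ _).1 hxy).2.2) hr
    have h1 : (χ u.1).1 = (χ v.1).1 :=
      rtg_invariant (f := fun x : ↑Sp => (χ x.1).1)
        (fun x y hxy => ((h₂ _ _).1 hxy).2.2) hb
    exact Subtype.ext (χ.toEquiv.injective (Prod.ext h1 h2))
  obtain ⟨isoB⟩ := bml_main (G := Lay) hLayconn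
    (fun x y h => hr1symm h) (fun x y h => hr2symm h)
    (fun u v h => ((h₁ _ _).1 h).1.1) (fun u v h => ((h₂ _ _).1 h).1.1)
    hsplit hSPsq hL3 ⟨o, rfl⟩
  -- convert the two induced pieces
  have key1 : ∀ v, ReflTransGen r₁ o v ↔ ∃ hv : v ∈ Sp,
      ReflTransGen R' ⟨o, rfl⟩ ⟨v, hv⟩ := by
    intro v
    constructor
    · intro h
      induction h with
      | refl => exact ⟨rfl, ReflTransGen.refl⟩
      | @tail x y hx step ih =>
        obtain ⟨hxm, hR⟩ := ih
        have hym : y ∈ Sp := (((h₁ _ _).1 step).1.2).symm.trans hxm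
        exact ⟨hym, hR.tail (show R' ⟨x, hxm⟩ ⟨y, hym⟩ from step)⟩
    · rintro ⟨hv, h⟩
      exact rtg_subtype_val h
  have key2 : ∀ v, ReflTransGen r₂ o v ↔ ∃ hv : v ∈ Sp,
      ReflTransGen B' ⟨o, rfl⟩ ⟨v, hv⟩ := by
    intro v
    constructor
    · intro h
      induction h with
      | refl => exact ⟨rfl, ReflTransGen.refl⟩
      | @tail x y hx step ih =>
        obtain ⟨hxm, hR⟩ := ih
        have hym : y ∈ Sp := (((h₂ _ _).1 step).1.2).symm.trans hxm
        exact ⟨hym, hR.tail (show B' ⟨x, hxm⟩ ⟨y, hym⟩ from step)⟩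
    · rintro ⟨hv, h⟩
      exact rtg_subtype_val h
  have isoI1 : (Lay.induce {x : ↑Sp | ReflTransGen R' ⟨o, rfl⟩ x}) ≃g
      G.induce {v | ReflTransGen r₁ o v} :=
    induceInduce G Sp _ _ (fun v => key1 v)
  have isoI2 : (Lay.induce {x : ↑Sp | ReflTransGen B' ⟨o, rfl⟩ x}) ≃g
      G.induce {v | ReflTransGen r₂ o v} :=
    induceInduce G Sp _ _ (fun v => key2 v)
  exact ⟨(iso1.trans isoB).trans (boxProdCongr isoI1 isoI2)⟩

end MLL


/-- The one-point graph is a unit for the box product. -/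
def boxProdOneIso {W : Type*} (H : SimpleGraph W) : (⊥ : SimpleGraph (Fin 1)).boxProd H ≃g H where
  toFun x := x.2
  invFun w := ((0 : Fin 1), w)
  left_inv x := Prod.ext (Subsingleton.elim _ _) rfl
  right_inv w := rfl
  map_rel_iff' := by
    intro x y
    show H.Adj x.2 y.2 ↔ (_ □ _).Adj x y
    rw [boxProd_adj]
    constructor
    · intro h
      exact Or.inr ⟨h, Subsingleton.elim _ _⟩
    · rintro (⟨h, _⟩ | ⟨h, _⟩)
      · exact absurd (Subsingleton.elim x.1 y.1) h.ne
      · exact h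

section Refinement

variable {A B C D : Type} {GA : SimpleGraph A} {GB : SimpleGraph B}
  {GC : SimpleGraph C} {GD : SimpleGraph D}

/-- Common refinement of two box product decompositions of a connected graph. -/
theorem refinement_concrete [Finite A] [Finite B]
    (hconn : (GA.boxProd GB).Connected) (φ : GA.boxProd GB ≃g GC.boxProd GD) :
    ∃ (W X Y Z : Type) (HW : SimpleGraph W) (HX : SimpleGraph X)
      (HY : SimpleGraph Y) (HZ : SimpleGraph Z),
      Finite W ∧ Finite X ∧ Finite Y ∧ Finite Z ∧
      HW.Connected ∧ HX.Connected ∧ HY.Connected ∧ HZ.Connected ∧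
      Nonempty (GA ≃g HW □ HX) ∧ Nonempty (GB ≃g HY □ HZ) ∧
      Nonempty (GC ≃g HW □ HY) ∧ Nonempty (GD ≃g HX □ HZ) := by
  classical
  have hne : Nonempty (A × B) := hconn.nonempty
  set G := GA □ GB with hG
  set o : A × B := Classical.arbitrary _ with ho
  set ψAB : G ≃g GA □ GB := RelIso.refl G.Adj with hψAB
  set ψBA : G ≃g GB □ GA := boxProdComm GA GB with hψBA
  set ψDC : G ≃g GD □ GC := φ.trans (boxProdComm GC GD) with hψDC
  set rac : (A × B) → (A × B) → Prop := fun u v => E1 ψAB u v ∧ E1 φ u v with hrac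
  set rad : (A × B) → (A × B) → Prop := fun u v => E1 ψAB u v ∧ E2 φ u v with hrad
  set rbc : (A × B) → (A × B) → Prop := fun u v => E2 ψAB u v ∧ E1 φ u v with hrbc
  set rbd : (A × B) → (A × B) → Prop := fun u v => E2 ψAB u v ∧ E2 φ u v with hrbd
  have hE1BA : ∀ u v, E1 ψBA u v ↔ E2 ψAB u v := fun u v => Iff.rfl
  have hE2BA : ∀ u v, E2 ψBA u v ↔ E1 ψAB u v := fun u v => Iff.rfl
  have hE1DC : ∀ u v, E1 ψDC u v ↔ E2 φ u v := fun u v => Iff.rfl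
  have hE2DC : ∀ u v, E2 ψDC u v ↔ E1 φ u v := fun u v => Iff.rfl
  obtain ⟨iA⟩ := MLL hconn ψAB φ o (r₁ := rac) (r₂ := rad)
    (fun u v => Iff.rfl) (fun u v => Iff.rfl)
  obtain ⟨iB⟩ := MLL hconn ψBA φ o (r₁ := rbc) (r₂ := rbd)
    (fun u v => Iff.rfl) (fun u v => Iff.rfl)
  obtain ⟨iC⟩ := MLL hconn φ ψAB o (r₁ := rac) (r₂ := rbc)
    (fun u v => ⟨fun ⟨h1, h2⟩ => ⟨h2, h1⟩, fun ⟨h1, h2⟩ => ⟨h2, h1⟩⟩)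
    (fun u v => ⟨fun ⟨h1, h2⟩ => ⟨h2, h1⟩, fun ⟨h1, h2⟩ => ⟨h2, h1⟩⟩)
  obtain ⟨iD⟩ := MLL hconn ψDC ψAB o (r₁ := rad) (r₂ := rbd)
    (fun u v => ⟨fun ⟨h1, h2⟩ => ⟨h2, h1⟩, fun ⟨h1, h2⟩ => ⟨h2, h1⟩⟩)
    (fun u v => ⟨fun ⟨h1, h2⟩ => ⟨h2, h1⟩, fun ⟨h1, h2⟩ => ⟨h2, h1⟩⟩)
  refine ⟨_, _, _, _, _, _, _, _, ?_, ?_, ?_, ?_, ?_, ?_, ?_, ?_, ⟨iA⟩, ⟨iB⟩, ⟨iC⟩, ⟨iD⟩⟩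
  · exact Subtype.finite
  · exact Subtype.finite
  · exact Subtype.finite
  · exact Subtype.finite
  · exact induce_rtg_connected (fun u v h => h.1.1) o
  · exact induce_rtg_connected (fun u v h => h.1.1) o
  · exact induce_rtg_connected (fun u v h => h.1.1) o
  · exact induce_rtg_connected (fun u v h => h.1.1) o

end Refinement

section GCMonoid

open SimpleGraph Relation

/-- Underlying type for iso classes of finite graphs. -/
abbrev GCU : Type := Σ n : ℕ, SimpleGraph (Fin n)

def gcRel (x y : GCU) : Prop := Nonempty (x.2 ≃g y.2)

theorem gcRel_equiv : Equivalence gcRel :=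
  ⟨fun _ => ⟨Iso.refl⟩, fun ⟨e⟩ => ⟨e.symm⟩, fun ⟨e⟩ ⟨f⟩ => ⟨e.trans f⟩⟩

/-- Isomorphism classes of finite simple graphs. -/
def GC : Type := Quot gcRel

/-- Relabelling a graph along an equivalence of vertex types. -/
def relabelIso {V W : Type*} (e : V ≃ W) (G : SimpleGraph V) : G ≃g G.comap e.symm where
  toEquiv := e
  map_rel_iff' := by
    intro a b
    show G.Adj (e.symm (e a)) (e.symm (e b)) ↔ G.Adj a b
    rw [e.symm_apply_apply, e.symm_apply_apply]

noncomputable def toGC {V : Type} [Fintype V] (G : SimpleGraph V) : GC :=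
  Quot.mk _ ⟨Fintype.card V, G.comap (Fintype.equivFin V).symm⟩

theorem toGC_eq_iff {V W : Type} [Fintype V] [Fintype W] {G : SimpleGraph V}
    {H : SimpleGraph W} : toGC G = toGC H ↔ Nonempty (G ≃g H) := by
  constructor
  · intro h
    have h' := (Equivalence.eqvGen_iff gcRel_equiv).1 (Quot.eq.1 h)
    obtain ⟨e⟩ := h'
    exact ⟨((relabelIso (Fintype.equivFin V) G).trans e).trans
      (relabelIso (Fintype.equivFin W) H).symm⟩
  · rintro ⟨e⟩
    exact Quot.sound ⟨((relabelIso (Fintype.equivFin V) G).symm.trans e).trans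
      (relabelIso (Fintype.equivFin W) H)⟩

theorem toGC_out (x : GC) : toGC x.out.2 = x := by
  conv_rhs => rw [← Quot.out_eq x]
  exact Quot.sound ⟨(relabelIso (Fintype.equivFin (Fin x.out.1)) x.out.2).symm⟩

noncomputable instance : CommMonoid GC where
  mul x y := toGC (x.out.2 □ y.out.2)
  one := toGC (⊥ : SimpleGraph (Fin 1))
  mul_assoc x y z := by
    show toGC ((toGC (x.out.2 □ y.out.2)).out.2 □ z.out.2)
       = toGC (x.out.2 □ (toGC (y.out.2 □ z.out.2)).out.2)
    rw [toGC_eq_iff]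
    obtain ⟨e₁⟩ := toGC_eq_iff.1 (toGC_out (toGC (x.out.2 □ y.out.2)))
    obtain ⟨e₂⟩ := toGC_eq_iff.1 (toGC_out (toGC (y.out.2 □ z.out.2)))
    exact ⟨((boxProdCongr e₁ (Iso.refl)).trans (boxProdAssoc _ _ _)).trans
      (boxProdCongr (Iso.refl) e₂.symm)⟩
  one_mul x := by
    show toGC ((toGC (⊥ : SimpleGraph (Fin 1))).out.2 □ x.out.2) = x
    conv_rhs => rw [← toGC_out x]
    rw [toGC_eq_iff]
    obtain ⟨e₁⟩ := toGC_eq_iff.1 (toGC_out (toGC (⊥ : SimpleGraph (Fin 1))))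
    exact ⟨(boxProdCongr e₁ (Iso.refl)).trans (boxProdOneIso _)⟩
  mul_one x := by
    show toGC (x.out.2 □ (toGC (⊥ : SimpleGraph (Fin 1))).out.2) = x
    conv_rhs => rw [← toGC_out x]
    rw [toGC_eq_iff]
    obtain ⟨e₁⟩ := toGC_eq_iff.1 (toGC_out (toGC (⊥ : SimpleGraph (Fin 1))))
    exact ⟨((boxProdCongr (Iso.refl) e₁).trans (boxProdComm _ _)).trans (boxProdOneIso _)⟩
  mul_comm x y := by
    show toGC (x.out.2 □ y.out.2) = toGC (y.out.2 □ x.out.2)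
    rw [toGC_eq_iff]
    exact ⟨boxProdComm _ _⟩

theorem gc_mul_def (x y : GC) : x * y = toGC (x.out.2 □ y.out.2) := rfl

theorem toGC_mul {V W : Type} [Fintype V] [Fintype W] (G : SimpleGraph V)
    (H : SimpleGraph W) : toGC G * toGC H = toGC (G □ H) := by
  rw [gc_mul_def, toGC_eq_iff]
  obtain ⟨e₁⟩ := toGC_eq_iff.1 (toGC_out (toGC G))
  obtain ⟨e₂⟩ := toGC_eq_iff.1 (toGC_out (toGC H))
  exact ⟨boxProdCongr e₁ e₂⟩

/-- Number of vertices of a graph class. -/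
def gcCard : GC → ℕ :=
  Quot.lift (fun x => x.1) (by
    rintro x y ⟨e⟩
    exact Fin.equiv_iff_eq.1 ⟨e.toEquiv⟩)

theorem gcCard_toGC {V : Type} [Fintype V] (G : SimpleGraph V) :
    gcCard (toGC G) = Fintype.card V := rfl

theorem gcCard_out (x : GC) : x.out.1 = gcCard x := by
  conv_rhs => rw [← Quot.out_eq x]
  rfl

theorem gcCard_mul (x y : GC) : gcCard (x * y) = gcCard x * gcCard y := by
  rw [gc_mul_def, gcCard_toGC, Fintype.card_prod, Fintype.card_fin, Fintype.card_fin,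
    gcCard_out, gcCard_out]

theorem gcCard_one : gcCard (1 : GC) = 1 := by
  show gcCard (toGC (⊥ : SimpleGraph (Fin 1))) = 1
  rw [gcCard_toGC, Fintype.card_fin]

/-- Connectivity of a graph class. -/
def gcConn : GC → Prop :=
  Quot.lift (fun x => x.2.Connected) (by
    rintro x y ⟨e⟩
    exact propext (Iso.connected_iff e))

theorem gcConn_toGC {V : Type} [Fintype V] (G : SimpleGraph V) :
    gcConn (toGC G) ↔ G.Connected :=
  (Iso.connected_iff (relabelIso (Fintype.equivFin V) G)).symm

theorem gcConn_out (x : GC) : gcConn x ↔ x.out.2.Connected := by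
  conv_lhs => rw [← Quot.out_eq x]
  exact Iff.rfl

/-- Primality of a graph class. -/
theorem isPrime_of_iso {V W : Type} [Fintype V] [Fintype W] {G : SimpleGraph V}
    {H : SimpleGraph W} (e : G ≃g H) (h : G.IsPrime) : H.IsPrime := by
  obtain ⟨hc, hcard, hp⟩ := h
  refine ⟨(Iso.connected_iff e).1 hc, ?_, ?_⟩
  · rwa [Fintype.card_congr e.toEquiv] at hcard
  · intro V₁ V₂ _ _ H₁ H₂ hf
    obtain ⟨f⟩ := hf
    exact hp V₁ V₂ H₁ H₂ ⟨e.trans f⟩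

def gcPrime : GC → Prop :=
  Quot.lift (fun x => x.2.IsPrime) (by
    rintro x y ⟨e⟩
    exact propext ⟨isPrime_of_iso e, isPrime_of_iso e.symm⟩)

theorem gcPrime_toGC {V : Type} [Fintype V] (G : SimpleGraph V) :
    gcPrime (toGC G) ↔ G.IsPrime :=
  ⟨isPrime_of_iso (relabelIso (Fintype.equivFin V) G).symm,
   isPrime_of_iso (relabelIso (Fintype.equivFin V) G)⟩

theorem gcPrime_out (x : GC) : gcPrime x ↔ x.out.2.IsPrime := by
  conv_lhs => rw [← Quot.out_eq x]
  exact Iff.rfl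

end GCMonoid

section Factorization

open SimpleGraph Relation

theorem one_def : (1 : GC) = toGC (⊥ : SimpleGraph (Fin 1)) := rfl

theorem gcConn_one : gcConn (1 : GC) := by
  rw [one_def, gcConn_toGC, connected_iff]
  refine ⟨fun u v => ?_, ⟨0⟩⟩
  rw [Subsingleton.elim u v]

theorem gcConn_mul {x y : GC} (hx : gcConn x) (hy : gcConn y) : gcConn (x * y) := by
  rw [gc_mul_def, gcConn_toGC]
  exact Connected.boxProd ((gcConn_out x).1 hx) ((gcConn_out y).1 hy)

theorem gcConn_mul_iff {x y : GC} : gcConn (x * y) ↔ gcConn x ∧ gcConn y := by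
  rw [gc_mul_def, gcConn_toGC, connected_boxProd, ← gcConn_out, ← gcConn_out]

theorem gcCard_eq_one {x : GC} (h : gcCard x = 1) : x = 1 := by
  rw [← toGC_out x, one_def, toGC_eq_iff]
  rw [← gcCard_out] at h
  refine ⟨⟨(finCongr h).trans (finCongr rfl), ?_⟩⟩
  intro a b
  constructor
  · intro had
    exact absurd (Subsingleton.elim _ _) had.ne
  · intro had
    have : Subsingleton (Fin x.out.1) := by rw [h]; infer_instance
    exact absurd (Subsingleton.elim a b) had.ne

theorem gcPrime_conn {p : GC} (hp : gcPrime p) : gcConn p := by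
  rw [gcConn_out]
  exact ((gcPrime_out p).1 hp).1

theorem gcPrime_card {p : GC} (hp : gcPrime p) : 2 ≤ gcCard p := by
  have := ((gcPrime_out p).1 hp).2.1
  rwa [Fintype.card_fin, gcCard_out] at this

theorem gcConn_card_pos {x : GC} (hx : gcConn x) : 1 ≤ gcCard x := by
  have : Nonempty (Fin x.out.1) := ((gcConn_out x).1 hx).nonempty
  rw [← gcCard_out]
  exact Nat.one_le_iff_ne_zero.2 fun h => by
    rw [h] at this
    exact (Fin.elim0 this.some)

theorem gcPrime_split {p y z : GC} (hp : gcPrime p) (h : p = y * z) :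
    gcCard y = 1 ∨ gcCard z = 1 := by
  have hiso : Nonempty (p.out.2 ≃g y.out.2 □ z.out.2) := by
    rw [← toGC_eq_iff, toGC_out, ← gc_mul_def]
    exact h
  have := ((gcPrime_out p).1 hp).2.2 (Fin y.out.1) (Fin z.out.1) y.out.2 z.out.2 hiso
  rwa [Fintype.card_fin, Fintype.card_fin, gcCard_out, gcCard_out] at this

theorem gcCard_multiset_prod (M : Multiset GC) :
    gcCard M.prod = (M.map gcCard).prod := by
  induction M using Multiset.induction with
  | empty => simpa using gcCard_one
  | cons a s ih => simp [gcCard_mul, ih]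

theorem gcConn_multiset_prod {M : Multiset GC} (h : ∀ p ∈ M, gcConn p) :
    gcConn M.prod := by
  induction M using Multiset.induction with
  | empty => simpa using gcConn_one
  | cons a s ih =>
    rw [Multiset.prod_cons]
    exact gcConn_mul (h a (Multiset.mem_cons_self a s))
      (ih fun p hp => h p (Multiset.mem_cons_of_mem hp))

/-- Existence of prime factorizations. -/
theorem gc_exists : ∀ (n : ℕ) (x : GC), gcCard x = n → gcConn x →
    ∃ M : Multiset GC, (∀ p ∈ M, gcPrime p) ∧ M.prod = x := by
  intro n
  induction n using Nat.strong_induction_on with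
  | _ n ih =>
    intro x hn hconn
    rcases Nat.lt_or_ge n 2 with h2 | h2
    · interval_cases n
      · exact absurd (hn ▸ gcConn_card_pos hconn) (by norm_num)
      · exact ⟨0, by simp, by simpa using (gcCard_eq_one hn).symm⟩
    · by_cases hp : gcPrime x
      · exact ⟨{x}, by simpa using hp, by simp⟩
      · have hrep : ¬ x.out.2.IsPrime := fun h => hp ((gcPrime_out x).2 h)
        rw [SimpleGraph.IsPrime] at hrep
        push_neg at hrep
        have hcardrep : (2 : ℕ) ≤ Fintype.card (Fin x.out.1) := by
          rw [Fintype.card_fin, gcCard_out, hn]; exact h2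
        obtain ⟨V₁, V₂, i₁, i₂, H₁, H₂, hiso, hc1, hc2⟩ :=
          hrep ((gcConn_out x).1 hconn) hcardrep
        obtain ⟨e⟩ := hiso
        have hxeq : x = toGC H₁ * toGC H₂ := by
          rw [toGC_mul, ← toGC_out x, toGC_eq_iff]
          exact ⟨e⟩
        have hcards : gcCard (toGC H₁) * gcCard (toGC H₂) = n := by
          rw [← gcCard_mul, ← hxeq, hn]
        have hconn' : gcConn (toGC H₁) ∧ gcConn (toGC H₂) := by
          rw [← gcConn_mul_iff, ← hxeq]; exact hconn
        set a := gcCard (toGC H₁) with ha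
        set b := gcCard (toGC H₂) with hb
        have ha1 : a ≠ 1 := by rw [ha, gcCard_toGC]; exact hc1
        have hb1 : b ≠ 1 := by rw [hb, gcCard_toGC]; exact hc2
        have hapos : 1 ≤ a := gcConn_card_pos hconn'.1
        have hbpos : 1 ≤ b := gcConn_card_pos hconn'.2
        have ha2 : 2 ≤ a := by omega
        have hb2 : 2 ≤ b := by omega
        have haltn : a < n := by nlinarith
        have hbltn : b < n := by nlinarith
        obtain ⟨M₁, hM₁p, hM₁⟩ := ih a haltn (toGC H₁) rfl hconn'.1
        obtain ⟨M₂, hM₂p, hM₂⟩ := ih b hbltn (toGC H₂) rfl hconn'.2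
        refine ⟨M₁ + M₂, ?_, ?_⟩
        · intro p hp'
          rcases Multiset.mem_add.1 hp' with h | h
          · exact hM₁p p h
          · exact hM₂p p h
        · rw [Multiset.prod_add, hM₁, hM₂, hxeq]

/-- The refinement lemma at the level of classes. -/
theorem gc_refine {x y z w : GC} (hx : gcConn x) (hy : gcConn y) (h : x * y = z * w) :
    ∃ a b c d : GC, gcConn a ∧ gcConn b ∧ gcConn c ∧ gcConn d ∧
      x = a * b ∧ y = c * d ∧ z = a * c ∧ w = b * d := by
  have hiso : Nonempty (x.out.2.boxProd y.out.2 ≃g z.out.2.boxProd w.out.2) := by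
    rw [← toGC_eq_iff, ← gc_mul_def, ← gc_mul_def]
    exact h
  obtain ⟨φ⟩ := hiso
  have hconn : (x.out.2 □ y.out.2).Connected :=
    Connected.boxProd ((gcConn_out x).1 hx) ((gcConn_out y).1 hy)
  obtain ⟨W, X, Y, Z, HW, HX, HY, HZ, fW, fX, fY, fZ, cW, cX, cY, cZ,
    ⟨iA⟩, ⟨iB⟩, ⟨iC⟩, ⟨iD⟩⟩ := refinement_concrete hconn φ
  haveI := fW; haveI := fX; haveI := fY; haveI := fZ
  haveI := Fintype.ofFinite W; haveI := Fintype.ofFinite X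
  haveI := Fintype.ofFinite Y; haveI := Fintype.ofFinite Z
  refine ⟨toGC HW, toGC HX, toGC HY, toGC HZ,
    (gcConn_toGC _).2 cW, (gcConn_toGC _).2 cX, (gcConn_toGC _).2 cY, (gcConn_toGC _).2 cZ,
    ?_, ?_, ?_, ?_⟩
  · rw [toGC_mul, ← toGC_out x, toGC_eq_iff]; exact ⟨iA⟩
  · rw [toGC_mul, ← toGC_out y, toGC_eq_iff]; exact ⟨iB⟩
  · rw [toGC_mul, ← toGC_out z, toGC_eq_iff]; exact ⟨iC⟩
  · rw [toGC_mul, ← toGC_out w, toGC_eq_iff]; exact ⟨iD⟩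

end Factorization

noncomputable instance : DecidableEq GC := Classical.decEq _

section Uniqueness

theorem gc_euclid : ∀ (n : ℕ) (N : Multiset GC), Multiset.card N = n →
    (∀ q ∈ N, gcPrime q) → ∀ p s : GC, gcPrime p → gcConn s → p * s = N.prod →
    ∃ q ∈ N, p = q ∧ s = (N.erase q).prod := by
  intro n
  induction n using Nat.strong_induction_on with
  | _ n ih =>
    intro N hcard hNp p s hp hs h
    rcases Multiset.empty_or_exists_mem N with rfl | ⟨q0, hq0⟩
    · exfalso
      have h1 : gcCard (p * s) = 1 := by rw [h]; simpa using gcCard_one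
      rw [gcCard_mul] at h1
      have := gcPrime_card hp
      have := gcConn_card_pos hs
      nlinarith
    · set N' := N.erase q0 with hN'
      have hcons : q0 ::ₘ N' = N := Multiset.cons_erase hq0
      have hprod : p * s = q0 * N'.prod := by
        rw [h, ← hcons, Multiset.prod_cons]
      have hN'p : ∀ q ∈ N', gcPrime q := fun q hq =>
        hNp q (Multiset.mem_of_mem_erase hq)
      have hT : gcConn N'.prod :=
        gcConn_multiset_prod fun q hq => gcPrime_conn (hN'p q hq)
      obtain ⟨a, b, c, d, hca, hcb, hcc, hcd, hpab, hscd, hq0ac, hTbd⟩ :=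
        gc_refine (gcPrime_conn hp) hs hprod
      rcases gcPrime_split hp hpab with h1 | h1
      · -- a trivial : p = b, q0 = c, T = b*d = p*d
        have ha : a = 1 := gcCard_eq_one h1
        have hpb : p = b := by rw [hpab, ha, one_mul]
        have hqc : q0 = c := by rw [hq0ac, ha, one_mul]
        have hTpd : N'.prod = p * d := by rw [hTbd, hpb]
        have hcard' : Multiset.card N' < n := by
          rw [← hcard, ← hcons]; simp
        obtain ⟨q, hqN', hpq, hd⟩ := ih _ hcard' N' rfl hN'p p d hp hcd hTpd.symm
        refine ⟨q, Multiset.mem_of_mem_erase hqN', hpq, ?_⟩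
        have herase : N.erase q = q0 ::ₘ (N'.erase q) := by
          rw [← hcons]
          by_cases hqq : q = q0
          · subst hqq
            rw [Multiset.erase_cons_head]
            exact (Multiset.cons_erase hqN').symm
          · exact Multiset.erase_cons_tail _ fun hh => hqq hh.symm
        rw [herase, Multiset.prod_cons, ← hd, hscd, hqc]
      · -- b trivial : p = a
        have hb : b = 1 := gcCard_eq_one h1
        have hpa : p = a := by rw [hpab, hb, mul_one]
        rcases gcPrime_split (hNp q0 hq0) hq0ac with h2 | h2
        · -- a = 1 would make p trivial: contradiction
          exfalso
          have := gcPrime_card hp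
          rw [hpa, gcCard_eq_one h2] at this
          rw [gcCard_one] at this
          omega
        · have hc : c = 1 := gcCard_eq_one h2
          have hq0a : q0 = a := by rw [hq0ac, hc, mul_one]
          refine ⟨q0, hq0, hpa.trans hq0a.symm, ?_⟩
          rw [← hN', hscd, hc, one_mul, hTbd, hb, one_mul]

theorem gc_unique : ∀ (n : ℕ) (M N : Multiset GC), Multiset.card M = n →
    (∀ p ∈ M, gcPrime p) → (∀ q ∈ N, gcPrime q) → M.prod = N.prod → M = N := by
  intro n
  induction n using Nat.strong_induction_on with
  | _ n ih =>
    intro M N hcard hMp hNp h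
    rcases Multiset.empty_or_exists_mem M with rfl | ⟨p, hpM⟩
    · rcases Multiset.empty_or_exists_mem N with rfl | ⟨q, hqN⟩
      · rfl
      · exfalso
        have hdvd : gcCard q ∣ (N.map gcCard).prod :=
          Multiset.dvd_prod (Multiset.mem_map_of_mem _ hqN)
        rw [← gcCard_multiset_prod, ← h] at hdvd
        simp only [Multiset.prod_zero] at hdvd
        rw [gcCard_one] at hdvd
        have hone : gcCard q = 1 := Nat.dvd_one.mp hdvd
        have := gcPrime_card (hNp q hqN)
        omega
    · set M' := M.erase p with hM'
      have hconsM : p ::ₘ M' = M := Multiset.cons_erase hpM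
      have hM'p : ∀ r ∈ M', gcPrime r := fun r hr => hMp r (Multiset.mem_of_mem_erase hr)
      have hprod : p * M'.prod = N.prod := by rw [← h, ← hconsM, Multiset.prod_cons]
      obtain ⟨q, hqN, hpq, hM'N⟩ := gc_euclid (Multiset.card N) N rfl hNp p M'.prod
        (hMp p hpM) (gcConn_multiset_prod fun r hr => gcPrime_conn (hM'p r hr)) hprod
      have hcard' : Multiset.card M' < n := by rw [← hcard, ← hconsM]; simp
      have hM'eq : M' = N.erase q := ih _ hcard' M' (N.erase q) rfl hM'p
        (fun r hr => hNp r (Multiset.mem_of_mem_erase hr)) hM'N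
      rw [← hconsM, hM'eq, hpq, Multiset.cons_erase hqN]

end Uniqueness

section Assembly

open SimpleGraph

noncomputable def sigToGC : (Σ m : ℕ, PrimeClasses m) → {x : GC // gcPrime x} :=
  fun s =>
    Quot.lift (fun (G : {G : SimpleGraph (Fin s.1) // G.IsPrime}) =>
        (⟨toGC G.1, (gcPrime_toGC G.1).2 G.2⟩ : {x : GC // gcPrime x}))
      (fun _ _ h => Subtype.ext (toGC_eq_iff.2 h)) s.2

theorem sigToGC_card (s : Σ m : ℕ, PrimeClasses m) : gcCard (sigToGC s).1 = s.1 := by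
  rcases s with ⟨m, p⟩
  induction p using Quot.ind with
  | _ G => exact (gcCard_toGC G.1).trans (Fintype.card_fin m)

theorem sigToGC_bij : Function.Bijective sigToGC := by
  constructor
  · rintro ⟨m, p⟩ ⟨m', p'⟩ h
    induction p using Quot.ind with
    | _ G =>
      induction p' using Quot.ind with
      | _ G' =>
        have hx : toGC G.1 = toGC G'.1 := congrArg Subtype.val h
        have hm : m = m' := by
          have := congrArg gcCard hx
          rwa [gcCard_toGC, gcCard_toGC, Fintype.card_fin, Fintype.card_fin] at this
        subst hm
        exact congrArg (Sigma.mk m) (Quot.sound (toGC_eq_iff.1 hx))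
  · rintro ⟨x, hx⟩
    rcases hout : x.out with ⟨m, Gr⟩
    have hGr : Gr.IsPrime := by
      have := (gcPrime_out x).1 hx
      rwa [hout] at this
    refine ⟨⟨m, Quot.mk _ ⟨Gr, hGr⟩⟩, ?_⟩
    apply Subtype.ext
    show toGC Gr = x
    have hto := toGC_out x
    rwa [hout] at hto

noncomputable def connToGC (n : ℕ) : ConnectedClasses n → {x : GC // gcConn x ∧ gcCard x = n} :=
  Quot.lift (fun (G : {G : SimpleGraph (Fin n) // G.Connected}) =>
      (⟨toGC G.1, (gcConn_toGC G.1).2 G.2,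
        (gcCard_toGC G.1).trans (Fintype.card_fin n)⟩ : {x : GC // gcConn x ∧ gcCard x = n}))
    (fun _ _ h => Subtype.ext (toGC_eq_iff.2 h))

theorem connToGC_bij (n : ℕ) : Function.Bijective (connToGC n) := by
  constructor
  · intro p p'
    induction p using Quot.ind with
    | _ G =>
      induction p' using Quot.ind with
      | _ G' =>
        intro h
        have hx : toGC G.1 = toGC G'.1 := congrArg Subtype.val h
        exact Quot.sound (toGC_eq_iff.1 hx)
  · rintro ⟨x, hconn, hcard⟩
    rcases hout : x.out with ⟨m, Gr⟩
    have hm : m = n := by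
      have := gcCard_out x
      rw [hout] at this
      rw [← hcard, ← this]
    subst hm
    have hGr : Gr.Connected := by
      have := (gcConn_out x).1 hconn
      rwa [hout] at this
    refine ⟨Quot.mk _ ⟨Gr, hGr⟩, ?_⟩
    apply Subtype.ext
    show toGC Gr = x
    have hto := toGC_out x
    rwa [hout] at hto

end Assembly

/-- For every `n ≥ 1`, the number of isomorphism classes of connected simple
graphs on `n` vertices equals the number of finite multisets of isomorphism
classes of prime graphs whose vertex counts multiply to `n`. -/
theorem card_connected_classes_eq_card_prime_multisets (n : ℕ) (hn : 1 ≤ n) :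
    Nat.card (ConnectedClasses n) =
      Nat.card {M : Multiset (Σ m : ℕ, PrimeClasses m) //
        (M.map Sigma.fst).prod = n} := by
  classical
  let eC : ConnectedClasses n ≃ {x : GC // gcConn x ∧ gcCard x = n} :=
    Equiv.ofBijective _ (connToGC_bij n)
  let eP : (Σ m : ℕ, PrimeClasses m) ≃ {x : GC // gcPrime x} :=
    Equiv.ofBijective _ sigToGC_bij
  have heP : ∀ s, (eP s).1 = (sigToGC s).1 := fun s => rfl
  have hcardP : ∀ s : Σ m : ℕ, PrimeClasses m, gcCard (eP s).1 = s.1 := fun s => sigToGC_card s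
  have hprodconn : ∀ (L : Multiset (Σ m : ℕ, PrimeClasses m)),
      gcConn (L.map fun s => (eP s).1).prod := by
    intro L
    apply gcConn_multiset_prod
    intro p hp
    rw [Multiset.mem_map] at hp
    obtain ⟨s, _, rfl⟩ := hp
    exact gcPrime_conn (eP s).2
  have hprodcard : ∀ (L : Multiset (Σ m : ℕ, PrimeClasses m)),
      gcCard (L.map fun s => (eP s).1).prod = (L.map Sigma.fst).prod := by
    intro L
    rw [gcCard_multiset_prod, Multiset.map_map]
    congr 1
    exact Multiset.map_congr rfl (fun s _ => hcardP s)
  let F : {M : Multiset (Σ m : ℕ, PrimeClasses m) // (M.map Sigma.fst).prod = n} →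
      ConnectedClasses n :=
    fun M => eC.symm ⟨(M.1.map fun s => (eP s).1).prod, hprodconn M.1,
      (hprodcard M.1).trans M.2⟩
  have hFinj : Function.Injective F := by
    intro M M' h
    have hprod : (M.1.map fun s => (eP s).1).prod = (M'.1.map fun s => (eP s).1).prod :=
      congrArg Subtype.val (eC.symm.injective h)
    have hprim : ∀ (L : Multiset (Σ m : ℕ, PrimeClasses m)),
        ∀ p ∈ (L.map fun s => (eP s).1), gcPrime p := by
      intro L p hp
      rw [Multiset.mem_map] at hp
      obtain ⟨s, _, rfl⟩ := hp
      exact (eP s).2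
    have hmap := gc_unique (Multiset.card (M.1.map fun s => (eP s).1)) _ _ rfl
      (hprim M.1) (hprim M'.1) hprod
    have hinj : Function.Injective (fun s : Σ m : ℕ, PrimeClasses m => (eP s).1) :=
      Subtype.val_injective.comp eP.injective
    exact Subtype.ext (Multiset.map_injective hinj hmap)
  have hFsurj : Function.Surjective F := by
    intro c
    obtain ⟨M₀, hM₀p, hM₀prod⟩ := gc_exists (gcCard (eC c).1) (eC c).1 rfl (eC c).2.1
    set M : Multiset (Σ m : ℕ, PrimeClasses m) :=
      M₀.attach.map (fun q => eP.symm ⟨q.1, hM₀p q.1 q.2⟩) with hM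
    have hmapval : (M.map fun s => (eP s).1) = M₀ := by
      rw [hM, Multiset.map_map]
      have : ((fun s : Σ m : ℕ, PrimeClasses m => (eP s).1) ∘
          (fun q : {x // x ∈ M₀} => eP.symm ⟨q.1, hM₀p q.1 q.2⟩)) =
          fun q : {x // x ∈ M₀} => q.1 := by
        funext q
        show (eP (eP.symm ⟨q.1, _⟩)).1 = q.1
        rw [Equiv.apply_symm_apply]
      rw [this, Multiset.attach_map_val]
    have hfst : (M.map Sigma.fst).prod = n := by
      have h1 : (M.map Sigma.fst).prod = gcCard (M.map fun s => (eP s).1).prod :=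
        (hprodcard M).symm
      rw [h1, hmapval, hM₀prod]
      exact (eC c).2.2
    refine ⟨⟨M, hfst⟩, ?_⟩
    show eC.symm _ = c
    have hsub : (⟨(M.map fun s => (eP s).1).prod, hprodconn M,
        (hprodcard M).trans hfst⟩ : {x : GC // gcConn x ∧ gcCard x = n}) = eC c := by
      apply Subtype.ext
      show (M.map fun s => (eP s).1).prod = (eC c).1
      rw [hmapval, hM₀prod]
    rw [hsub, Equiv.symm_apply_apply]
  exact (Nat.card_eq_of_bijective F ⟨hFinj, hFsurj⟩).symm
end

section
/- Let n ≥ 2 be an integer and write n = r^e where e is the largest integer such that n is a perfect e-th power (so r is not a perfect power of a smaller integer). For m ≥ 2 let b_m denote the number of isomorphism classes of prime graphs on m vertices, and define d_m := ∑ b_a / j, the sum over all pairs (a, j) with a ≥ 2, j ≥ 1 and a^j = m. Then b_n = (1/e) · ∑_{l | e} μ(e/l) · l · d_{r^l}, where μ is the Möbius function and the sum is over all positive divisors l of e. -/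
open SimpleGraph ArithmeticFunction

/-- The number of isomorphism classes of prime graphs on `m` vertices. -/
noncomputable def numPrimeClasses (m : ℕ) : ℕ :=
  Nat.card
    (Quot fun G H : {G : SimpleGraph (Fin m) // G.IsPrime} => Nonempty (G.1 ≃g H.1))

/-- If `k` divides every exponent in the factorization of `m`, then `m` is a `k`-th power. -/
lemma exists_eq_pow_of_dvd_factorization (m k : ℕ) (hm : m ≠ 0)
    (h : ∀ p, k ∣ m.factorization p) : ∃ c, m = c ^ k := by
  refine ⟨m.factorization.prod fun p t => p ^ (t / k), ?_⟩
  conv_lhs => rw [← Nat.factorization_prod_pow_eq_self hm]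
  rw [Finsupp.prod, Finsupp.prod, ← Finset.prod_pow]
  refine Finset.prod_congr rfl fun p _ => ?_
  rw [← pow_mul, Nat.div_mul_cancel (h p)]

open Classical in
/-- Let `n ≥ 2` and write `n = r^e` with `e` the largest integer such that `n` is
a perfect `e`-th power.  With `b_m` the number of unlabeled prime graphs on `m`
vertices and `d_m = ∑_{a^j = m, a ≥ 2, j ≥ 1} b_a / j`, one has
`b_n = (1/e) ∑_{l ∣ e} μ(e/l) · l · d_{r^l}`. -/
theorem numPrimeClasses_eq_moebius_inversion (n r e : ℕ) (hn : 2 ≤ n)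
    (hre : n = r ^ e)
    (hmax : ∀ e' : ℕ, (∃ r' : ℕ, n = r' ^ e') → e' ≤ e)
    (d : ℕ → ℚ)
    (hd : ∀ m, d m =
      ∑ᶠ q : ℕ × ℕ,
        (if 2 ≤ q.1 ∧ 1 ≤ q.2 ∧ q.1 ^ q.2 = m
          then (numPrimeClasses q.1 : ℚ) / q.2 else 0)) :
    (numPrimeClasses n : ℚ) =
      (1 / (e : ℚ)) * ∑ l ∈ e.divisors, (moebius (e / l) : ℚ) * l * d (r ^ l) := by
  have he : 1 ≤ e := by
    rcases Nat.eq_zero_or_pos e with h0 | h0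
    · subst h0; simp at hre; omega
    · exact h0
  have hr : 2 ≤ r := by
    rcases Nat.lt_or_ge r 2 with h2 | h2
    · interval_cases r
      · rw [zero_pow (by omega)] at hre; omega
      · rw [one_pow] at hre; omega
    · exact h2
  -- r is not a proper perfect power
  have hrprim : ∀ c k : ℕ, r = c ^ k → k = 1 := by
    intro c k hck
    have hk0 : k ≠ 0 := by rintro rfl; simp at hck; omega
    have h1 : k * e ≤ 1 * e := by
      simpa using hmax (k * e) ⟨c, by rw [hre, hck, ← pow_mul]⟩
    have := Nat.le_of_mul_le_mul_right h1 (by omega : 0 < e)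
    omega
  -- Key number-theoretic fact
  have key : ∀ a j l : ℕ, 2 ≤ a → 1 ≤ j → 1 ≤ l → a ^ j = r ^ l →
      j ∣ l ∧ a = r ^ (l / j) := by
    intro a j l ha hj hl hajl
    set g := Nat.gcd j l with hg
    have hg0 : 0 < g := Nat.gcd_pos_of_pos_left _ (by omega)
    have hgj : g ∣ j := Nat.gcd_dvd_left j l
    have hgl : g ∣ l := Nat.gcd_dvd_right j l
    have hcop : (j / g).Coprime (l / g) := Nat.coprime_div_gcd_div_gcd hg0
    have hbase : a ^ (j / g) = r ^ (l / g) := by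
      have h2 : (a ^ (j / g)) ^ g = (r ^ (l / g)) ^ g := by
        rw [← pow_mul, ← pow_mul, Nat.div_mul_cancel hgj, Nat.div_mul_cancel hgl, hajl]
      exact Nat.pow_left_injective (by omega) h2
    have hj'0 : 0 < j / g := Nat.div_pos (Nat.le_of_dvd (by omega) hgj) hg0
    -- j/g divides every exponent of r
    have hdvd : ∀ p, (j / g) ∣ r.factorization p := by
      intro p
      have h3 := congrArg (fun m => m.factorization p) hbase
      simp only [Nat.factorization_pow, Finsupp.smul_apply, smul_eq_mul] at h3
      exact Nat.Coprime.dvd_of_dvd_mul_left hcop ⟨a.factorization p, h3.symm⟩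
    obtain ⟨c, hc⟩ := exists_eq_pow_of_dvd_factorization r (j / g) (by omega) hdvd
    have hj'1 : j / g = 1 := hrprim c (j / g) hc
    have hjg : j = g := by
      have := Nat.div_mul_cancel hgj
      rw [hj'1, one_mul] at this
      omega
    rw [hjg]
    refine ⟨hgl, ?_⟩
    rw [← hbase, hj'1, pow_one]
  -- computing d on powers of r
  have hdval : ∀ l : ℕ, 1 ≤ l →
      d (r ^ l) = ∑ j ∈ l.divisors, (numPrimeClasses (r ^ (l / j)) : ℚ) / j := by
    intro l hl
    rw [hd]
    have hsub : (Function.support fun q : ℕ × ℕ =>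
        if 2 ≤ q.1 ∧ 1 ≤ q.2 ∧ q.1 ^ q.2 = r ^ l
          then (numPrimeClasses q.1 : ℚ) / q.2 else 0) ⊆
        ↑(l.divisors.image fun j => ((r ^ (l / j), j) : ℕ × ℕ)) := by
      intro q hq
      simp only [Function.mem_support, ne_eq, ite_eq_right_iff, not_forall] at hq
      obtain ⟨⟨h1, h2, h3⟩, -⟩ := hq
      obtain ⟨hdvd, heq⟩ := key q.1 q.2 l h1 h2 hl h3
      simp only [Finset.coe_image, Set.mem_image, Finset.mem_coe, Nat.mem_divisors]
      exact ⟨q.2, ⟨hdvd, by omega⟩, by rw [← heq]⟩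
    rw [finsum_eq_sum_of_support_subset _ hsub, Finset.sum_image ?_]
    · refine Finset.sum_congr rfl fun j hj => ?_
      rw [Nat.mem_divisors] at hj
      have hj1 : 1 ≤ j := Nat.pos_of_dvd_of_pos hj.1 (by omega)
      have hlj : 1 ≤ l / j := Nat.one_le_div_iff (by omega) |>.2 (Nat.le_of_dvd (by omega) hj.1)
      rw [if_pos]
      refine ⟨le_trans hr (Nat.le_self_pow (by omega) r), hj1, ?_⟩
      rw [← pow_mul, Nat.div_mul_cancel hj.1]
    · intro x _ y _ hxy
      exact congrArg Prod.snd hxy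
  -- the divisor-sum identity
  have hsum : ∀ l : ℕ, l > 0 →
      ∑ k ∈ l.divisors, ((k : ℚ) * numPrimeClasses (r ^ k)) = (l : ℚ) * d (r ^ l) := by
    intro l hl
    rw [hdval l hl, Finset.mul_sum]
    rw [← Nat.sum_div_divisors l fun k => (k : ℚ) * numPrimeClasses (r ^ k)]
    refine Finset.sum_congr rfl fun j hj => ?_
    rw [Nat.mem_divisors] at hj
    have hj0 : (j : ℚ) ≠ 0 :=
      Nat.cast_ne_zero.2 (Nat.pos_of_dvd_of_pos hj.1 hl).ne'
    rw [Nat.cast_div hj.1 hj0]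
    field_simp
  -- Möbius inversion
  have hinv := (sum_eq_iff_sum_mul_moebius_eq
    (f := fun k => (k : ℚ) * numPrimeClasses (r ^ k))
    (g := fun l => (l : ℚ) * d (r ^ l))).mp hsum e (by omega)
  rw [Nat.sum_divisorsAntidiagonal' (f := fun i j => (moebius i : ℚ) * ((j : ℚ) * d (r ^ j)))]
    at hinv
  have hrw : ∑ l ∈ e.divisors, (moebius (e / l) : ℚ) * l * d (r ^ l)
      = (e : ℚ) * numPrimeClasses n := by
    rw [hre, ← hinv]
    exact Finset.sum_congr rfl fun l _ => by ring
  rw [hrw]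
  have he0 : (e : ℚ) ≠ 0 := by exact_mod_cast (by omega : e ≠ 0)
  field_simp
end
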